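/- arXiv:math/0410365 — 4 statements merged into one kernel-verified Lean document; each statement's English description precedes it below -/
import Mathlib

section
/- There is a unique family of elements N_{u,v} ∈ NSymm (u, v ≥ 1) such that for all u, v ≥ 1: C(u+v, u) · Z_{u+v} = ∑ Z_{u₀} Z_{v₀} N_{u₁,v₁} ··· N_{u_k,v_k}, where C(u+v, u) is the binomial coefficient, and the sum is over all k ≥ 0, u₀, v₀ ≥ 0 and u_i, v_i ≥ 1 (1 ≤ i ≤ k) with u₀ + u₁ + ··· + u_k = u and v₀ + v₁ + ··· + v_k = v (Z₀ = 1), subject to the condition that the reduced pairs (u_i/gcd(u_i,v_i), v_i/gcd(u_i,v_i)), i = 1, ..., k, are strictly increasing in the order <_wl. Moreover: (i) N_{u,v} − C(u+v,u)·Z_{u+v} is a ℤ-linear combination of monomials of length at least 2; (ii) N_{u,v} is homogeneous of weight u + v; (iii) for each pair a, b ≥ 1 with gcd(a,b) = 1, the sequence 1, N_{a,b}, N_{2a,2b}, N_{3a,3b}, ... is a curve in NSymm. -/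
open scoped TensorProduct

noncomputable section

/-- `NSymm`, the free ring on `Z₁, Z₂, …`; generator `i : ℕ` represents `Z_{i+1}`. -/
abbrev NSymm : Type := MonoidAlgebra ℤ (FreeMonoid ℕ)

def Zgen : ℕ → NSymm
  | 0 => 1
  | n + 1 => MonoidAlgebra.of ℤ (FreeMonoid ℕ) (FreeMonoid.of n)

def Zword (l : List ℕ) : NSymm := (l.map Zgen).prod

def Delta : NSymm →ₐ[ℤ] NSymm ⊗[ℤ] NSymm :=
  MonoidAlgebra.lift ℤ (NSymm ⊗[ℤ] NSymm) (FreeMonoid ℕ)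
    (FreeMonoid.lift fun i =>
      ∑ a ∈ Finset.range (i + 2), Zgen a ⊗ₜ[ℤ] Zgen (i + 1 - a))

def IsPrimitive (P : NSymm) : Prop :=
  Delta P = 1 ⊗ₜ[ℤ] P + P ⊗ₜ[ℤ] 1

def Ver (r : ℕ) : NSymm →ₐ[ℤ] NSymm :=
  MonoidAlgebra.lift ℤ NSymm (FreeMonoid ℕ)
    (FreeMonoid.lift fun i => if r ∣ (i + 1) then Zgen ((i + 1) / r) else 0)

def NewtonP (n : ℕ) : NSymm :=
  ∑ c : Composition n,
    ((-1 : ℤ) ^ (c.length + 1) * (c.blocks.getLastD 0 : ℤ)) • Zword c.blocks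

def IsComposition (l : List ℕ) : Prop := l ≠ [] ∧ ∀ a ∈ l, 0 < a

def lexLt (l l' : List ℕ) : Prop := List.Lex (· < ·) l l'

def IsLyndon (l : List ℕ) : Prop :=
  IsComposition l ∧ ∀ i, 0 < i → i < l.length → lexLt l (l.drop i)

def gcdL (l : List ℕ) : ℕ := l.foldr Nat.gcd 0

def wtC (l : List ℕ) : ℕ := l.sum

def wllLt (l l' : List ℕ) : Prop :=
  wtC l < wtC l' ∨ (wtC l = wtC l' ∧
    (l.length < l'.length ∨ (l.length = l'.length ∧ lexLt l l')))

def coeffw (P : NSymm) (w : FreeMonoid ℕ) : ℤ := P.coeff w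

def coeffC (P : NSymm) (l : List ℕ) : ℤ := coeffw P (FreeMonoid.ofList (l.map (· - 1)))

def wtWord (w : FreeMonoid ℕ) : ℕ := (FreeMonoid.toList w).sum + (FreeMonoid.toList w).length

def IsHomog (P : NSymm) (n : ℕ) : Prop := ∀ w, coeffw P w ≠ 0 → wtWord w = n

abbrev TwoNSymm : Type := MonoidAlgebra ℤ (FreeMonoid (ℕ ⊕ ℕ))

def Xgen : ℕ → TwoNSymm
  | 0 => 1
  | n + 1 => MonoidAlgebra.of ℤ (FreeMonoid (ℕ ⊕ ℕ)) (FreeMonoid.of (Sum.inl n))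

def Ygen : ℕ → TwoNSymm
  | 0 => 1
  | n + 1 => MonoidAlgebra.of ℤ (FreeMonoid (ℕ ⊕ ℕ)) (FreeMonoid.of (Sum.inr n))

def Delta2 : TwoNSymm →ₐ[ℤ] TwoNSymm ⊗[ℤ] TwoNSymm :=
  MonoidAlgebra.lift ℤ (TwoNSymm ⊗[ℤ] TwoNSymm) (FreeMonoid (ℕ ⊕ ℕ))
    (FreeMonoid.lift fun s =>
      Sum.elim
        (fun i => ∑ a ∈ Finset.range (i + 2), Xgen a ⊗ₜ[ℤ] Xgen (i + 1 - a))
        (fun i => ∑ a ∈ Finset.range (i + 2), Ygen a ⊗ₜ[ℤ] Ygen (i + 1 - a)) s)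

def Ver2 (r : ℕ) : TwoNSymm →ₐ[ℤ] TwoNSymm :=
  MonoidAlgebra.lift ℤ TwoNSymm (FreeMonoid (ℕ ⊕ ℕ))
    (FreeMonoid.lift fun s =>
      Sum.elim
        (fun i => if r ∣ (i + 1) then Xgen ((i + 1) / r) else 0)
        (fun i => if r ∣ (i + 1) then Ygen ((i + 1) / r) else 0) s)

def coeffw2 (P : TwoNSymm) (w : FreeMonoid (ℕ ⊕ ℕ)) : ℤ := P.coeff w

def xwt (w : FreeMonoid (ℕ ⊕ ℕ)) : ℕ :=
  ((FreeMonoid.toList w).map (Sum.elim (· + 1) (fun _ => 0))).sum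

def ywt (w : FreeMonoid (ℕ ⊕ ℕ)) : ℕ :=
  ((FreeMonoid.toList w).map (Sum.elim (fun _ => 0) (· + 1))).sum

def wlLt (p q : ℕ × ℕ) : Prop :=
  p.1 + p.2 < q.1 + q.2 ∨ (p.1 + p.2 = q.1 + q.2 ∧ p.1 < q.1)

def reduceP (p : ℕ × ℕ) : ℕ × ℕ := (p.1 / Nat.gcd p.1 p.2, p.2 / Nat.gcd p.1 p.2)

def LIdentity (L : ℕ → ℕ → TwoNSymm) : Prop :=
  ∀ u v : ℕ, 1 ≤ u → 1 ≤ v →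
    Xgen u * Ygen v - Ygen v * Xgen u =
      ∑ᶠ p ∈ {p : (ℕ × ℕ) × List (ℕ × ℕ) |
          p.2 ≠ [] ∧ (∀ q ∈ p.2, 0 < q.1 ∧ 0 < q.2) ∧
          p.1.1 + (p.2.map Prod.fst).sum = u ∧
          p.1.2 + (p.2.map Prod.snd).sum = v ∧
          (p.2.map reduceP).Pairwise wlLt},
        Ygen p.1.2 * Xgen p.1.1 * (p.2.map fun q => L q.1 q.2).prod

def NIdentity (N : ℕ → ℕ → NSymm) : Prop :=
  ∀ u v : ℕ, 1 ≤ u → 1 ≤ v →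
    (((u + v).choose u : ℤ)) • Zgen (u + v) =
      ∑ᶠ p ∈ {p : (ℕ × ℕ) × List (ℕ × ℕ) |
          (∀ q ∈ p.2, 0 < q.1 ∧ 0 < q.2) ∧
          p.1.1 + (p.2.map Prod.fst).sum = u ∧
          p.1.2 + (p.2.map Prod.snd).sum = v ∧
          (p.2.map reduceP).Pairwise wlLt},
        Zgen p.1.1 * Zgen p.1.2 * (p.2.map fun q => N q.1 q.2).prod

def substXY (d1 d2 : ℕ → NSymm) : TwoNSymm →ₐ[ℤ] NSymm :=
  MonoidAlgebra.lift ℤ NSymm (FreeMonoid (ℕ ⊕ ℕ))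
    (FreeMonoid.lift fun s => Sum.elim (fun i => d1 (i + 1)) (fun i => d2 (i + 1)) s)

def substZ (e : ℕ → NSymm) : NSymm →ₐ[ℤ] NSymm :=
  MonoidAlgebra.lift ℤ NSymm (FreeMonoid ℕ) (FreeMonoid.lift fun i => e (i + 1))

def dSpec (L : ℕ → ℕ → TwoNSymm) (d : List ℕ → ℕ → NSymm) : Prop :=
  (∀ l, IsLyndon l → d l 0 = 1) ∧
  (∀ n, 0 < n → ∀ i, d [n] i = Zgen i) ∧
  (∀ l, IsLyndon l → 1 < l.length →
    ∀ i₀, 0 < i₀ → i₀ < l.length →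
      (∀ j, 0 < j → j < l.length → ¬ lexLt (l.drop j) (l.drop i₀)) →
      ∀ i, d l i =
        substXY (d (l.take i₀)) (d (l.drop i₀))
          (L (i * gcdL (l.take i₀) / gcdL l) (i * gcdL (l.drop i₀) / gcdL l)))

def Pof (d : List ℕ → ℕ → NSymm) (l : List ℕ) : NSymm := substZ (d l) (NewtonP (gcdL l))

def IsCurveN (c : ℕ → NSymm) : Prop :=
  c 0 = 1 ∧ ∀ n, Delta (c n) = ∑ i ∈ Finset.range (n + 1), c i ⊗ₜ[ℤ] c (n - i)

def IsCurve2 (c : ℕ → TwoNSymm) : Prop :=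
  c 0 = 1 ∧ ∀ n, Delta2 (c n) = ∑ i ∈ Finset.range (n + 1), c i ⊗ₜ[ℤ] c (n - i)

def IsVCurveN (c : ℕ → NSymm) : Prop :=
  IsCurveN c ∧ ∀ r n, 1 ≤ r → 1 ≤ n → Ver r (c n) = if r ∣ n then c (n / r) else 0

def IsCurveB (R : Type) [CommRing R] {H : Type} [Ring H] [Bialgebra R H] (c : ℕ → H) : Prop :=
  c 0 = 1 ∧ ∀ n, Coalgebra.comul (R := R) (c n) = ∑ i ∈ Finset.range (n + 1), c i ⊗ₜ[R] c (n - i)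

def Is2CurveB (R : Type) [CommRing R] {H : Type} [Ring H] [Bialgebra R H]
    (c : ℕ → ℕ → H) : Prop :=
  c 0 0 = 1 ∧ ∀ n m, Coalgebra.comul (R := R) (c n m) =
    ∑ i ∈ Finset.range (n + 1), ∑ j ∈ Finset.range (m + 1),
      c i j ⊗ₜ[R] c (n - i) (m - j)

def Mq (α : List ℕ) : MvPowerSeries ℕ ℤ :=
  fun m => if (m.support.sort (· ≤ ·)).map m = α then 1 else 0

def degm (m : ℕ →₀ ℕ) : ℕ := m.sum fun _ e => e

def QSymmMod : Submodule ℤ (MvPowerSeries ℕ ℤ) :=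
  Submodule.span ℤ (insert 1 {f | ∃ α : List ℕ, IsComposition α ∧ f = Mq α})

abbrev NSymmQ : Type := MonoidAlgebra ℚ (FreeMonoid ℕ)

def ZgenQ : ℕ → NSymmQ
  | 0 => 1
  | n + 1 => MonoidAlgebra.of ℚ (FreeMonoid ℕ) (FreeMonoid.of n)

def DeltaQ : NSymmQ →ₐ[ℚ] NSymmQ ⊗[ℚ] NSymmQ :=
  MonoidAlgebra.lift ℚ (NSymmQ ⊗[ℚ] NSymmQ) (FreeMonoid ℕ)
    (FreeMonoid.lift fun i =>
      ∑ a ∈ Finset.range (i + 2), ZgenQ a ⊗ₜ[ℚ] ZgenQ (i + 1 - a))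

def IsPrimitiveQ (P : NSymmQ) : Prop :=
  DeltaQ P = 1 ⊗ₜ[ℚ] P + P ⊗ₜ[ℚ] 1

def toQ : NSymm →ₐ[ℤ] NSymmQ :=
  MonoidAlgebra.lift ℤ NSymmQ (FreeMonoid ℕ) (MonoidAlgebra.of ℚ (FreeMonoid ℕ))


namespace SecondIsobaricAux

instance : DecidableRel wlLt := fun p q => by
  unfold wlLt; infer_instance

/-- Finset of lists of length at most `n` with entries in `s`. -/
def allLists (s : Finset (ℕ × ℕ)) : ℕ → Finset (List (ℕ × ℕ))
  | 0 => {[]}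
  | n + 1 => {[]} ∪ s.biUnion (fun a => (allLists s n).image (a :: ·))

lemma mem_allLists {s : Finset (ℕ × ℕ)} : ∀ {n : ℕ} {l : List (ℕ × ℕ)},
    l ∈ allLists s n ↔ l.length ≤ n ∧ ∀ a ∈ l, a ∈ s := by
  intro n
  induction n with
  | zero =>
    intro l
    constructor
    · intro h
      simp only [allLists, Finset.mem_singleton] at h
      subst h; simp
    · intro ⟨h1, _⟩
      have : l = [] := List.eq_nil_of_length_eq_zero (Nat.le_zero.mp h1)
      simp [allLists, this]
  | succ n ih =>
    intro l
    cases l with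
    | nil => simp [allLists]
    | cons a l =>
      simp only [allLists, Finset.mem_union, Finset.mem_singleton, Finset.mem_biUnion,
        Finset.mem_image]
      constructor
      · rintro (h | ⟨b, hb, ⟨m, hm, hml⟩⟩)
        · exact absurd h (by simp)
        · obtain ⟨rfl, rfl⟩ : b = a ∧ m = l := by
            constructor <;> [exact (List.cons.injEq _ _ _ _ ▸ hml).1;
              exact (List.cons.injEq _ _ _ _ ▸ hml).2]
          refine ⟨?_, ?_⟩
          · simpa using Nat.succ_le_succ (ih.mp hm).1
          · intro x hx
            rcases List.mem_cons.mp hx with rfl | hx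
            · exact hb
            · exact (ih.mp hm).2 x hx
      · rintro ⟨h1, h2⟩
        right
        exact ⟨a, h2 a (by simp), l, ih.mpr ⟨by simpa using h1, fun x hx => h2 x (by simp [hx])⟩, rfl⟩

/-- The predicate cutting out the index set of the `N`-identity. -/
def Pred (u v : ℕ) (p : (ℕ × ℕ) × List (ℕ × ℕ)) : Prop :=
  (∀ q ∈ p.2, 0 < q.1 ∧ 0 < q.2) ∧
    p.1.1 + (p.2.map Prod.fst).sum = u ∧
    p.1.2 + (p.2.map Prod.snd).sum = v ∧
    (p.2.map reduceP).Pairwise wlLt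

instance (u v : ℕ) : DecidablePred (Pred u v) := fun p => by
  unfold Pred; infer_instance

/-- The Finset version of the index set. -/
def FF (u v : ℕ) : Finset ((ℕ × ℕ) × List (ℕ × ℕ)) :=
  (((Finset.range (u + 1) ×ˢ Finset.range (v + 1)) ×ˢ
    allLists (Finset.range (u + 1) ×ˢ Finset.range (v + 1)) u)).filter (Pred u v)

lemma length_le_sum {l : List ℕ} (h : ∀ x ∈ l, 1 ≤ x) : l.length ≤ l.sum := by
  induction l with
  | nil => simp
  | cons a l ih =>
    simp only [List.length_cons, List.sum_cons]
    have := ih (fun x hx => h x (by simp [hx]))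
    have := h a (by simp)
    omega

lemma mem_FF {u v : ℕ} {p : (ℕ × ℕ) × List (ℕ × ℕ)} :
    p ∈ FF u v ↔ Pred u v p := by
  rw [FF, Finset.mem_filter]
  constructor
  · exact fun h => h.2
  · intro h
    refine ⟨?_, h⟩
    obtain ⟨hpos, hu, hv, _⟩ := h
    have hsum1 : (p.2.map Prod.fst).sum ≤ u := by omega
    have hsum2 : (p.2.map Prod.snd).sum ≤ v := by omega
    have hlen : p.2.length ≤ u := by
      have := length_le_sum (l := p.2.map Prod.fst) (fun x hx => by
        obtain ⟨q, hq, rfl⟩ := List.mem_map.mp hx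
        exact (hpos q hq).1)
      simp only [List.length_map] at this
      omega
    simp only [Finset.mem_product, Finset.mem_range, mem_allLists]
    refine ⟨⟨Nat.lt_succ_of_le (by omega), Nat.lt_succ_of_le (by omega)⟩, hlen, ?_⟩
    intro q hq
    have h1 : q.1 ≤ (p.2.map Prod.fst).sum :=
      List.single_le_sum (fun x _ => Nat.zero_le x) _ (List.mem_map_of_mem hq)
    have h2 : q.2 ≤ (p.2.map Prod.snd).sum :=
      List.single_le_sum (fun x _ => Nat.zero_le x) _ (List.mem_map_of_mem hq)
    exact ⟨by omega, by omega⟩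

lemma coe_FF (u v : ℕ) : {p : (ℕ × ℕ) × List (ℕ × ℕ) |
    (∀ q ∈ p.2, 0 < q.1 ∧ 0 < q.2) ∧
    p.1.1 + (p.2.map Prod.fst).sum = u ∧
    p.1.2 + (p.2.map Prod.snd).sum = v ∧
    (p.2.map reduceP).Pairwise wlLt} = ↑(FF u v) := by
  ext p
  simp only [Set.mem_setOf_eq, Finset.mem_coe, mem_FF, Pred]

/-- The generic term of the identity. -/
def TmG {H : Type*} [Ring H] (Z : ℕ → H) (M : ℕ → ℕ → H) (p : (ℕ × ℕ) × List (ℕ × ℕ)) : H :=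
  Z p.1.1 * Z p.1.2 * (p.2.map fun q => M q.1 q.2).prod

lemma nidentity_iff (N : ℕ → ℕ → NSymm) : NIdentity N ↔ ∀ u v : ℕ, 1 ≤ u → 1 ≤ v →
    (((u + v).choose u : ℤ)) • Zgen (u + v) = ∑ p ∈ FF u v, TmG Zgen N p := by
  unfold NIdentity
  refine forall₂_congr fun u v => ?_
  refine imp_congr_right fun _ => imp_congr_right fun _ => ?_
  rw [coe_FF, finsum_mem_coe_finset]
  rfl

/-- The distinguished index. -/
def p0 (u v : ℕ) : (ℕ × ℕ) × List (ℕ × ℕ) := ((0, 0), [(u, v)])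

lemma p0_mem {u v : ℕ} (hu : 1 ≤ u) (hv : 1 ≤ v) : p0 u v ∈ FF u v := by
  rw [mem_FF]
  refine ⟨?_, by simp [p0], by simp [p0], by simp [p0]⟩
  rintro q hq
  simp only [p0, List.mem_singleton] at hq
  subst hq; exact ⟨hu, hv⟩

lemma TmG_p0 {H : Type*} [Ring H] (Z : ℕ → H) (hZ : Z 0 = 1) (M : ℕ → ℕ → H) (u v : ℕ) :
    TmG Z M (p0 u v) = M u v := by
  simp [TmG, p0, hZ]

lemma eq_singleton_of_sum {l : List (ℕ × ℕ)} {q : ℕ × ℕ} (hq : q ∈ l)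
    (hpos : ∀ r ∈ l, 0 < r.1) (hs : (l.map Prod.fst).sum = q.1) : l = [q] := by
  obtain ⟨s, t, rfl⟩ := List.append_of_mem hq
  simp only [List.map_append, List.sum_append, List.map_cons, List.sum_cons] at hs
  have hs0 : (s.map Prod.fst).sum = 0 ∧ (t.map Prod.fst).sum = 0 := by omega
  cases s with
  | cons a s =>
    exact absurd hs0.1 (by
      simp only [List.map_cons, List.sum_cons]
      have := hpos a (by simp)
      omega)
  | nil =>
    cases t with
    | nil => rfl
    | cons a t =>
      exact absurd hs0.2 (by
        simp only [List.map_cons, List.sum_cons]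
        have := hpos a (by simp)
        omega)

/-- Any entry of a non-distinguished index has strictly smaller total weight. -/
lemma entry_lt {u v : ℕ} {p : (ℕ × ℕ) × List (ℕ × ℕ)} (hp : p ∈ FF u v)
    (hne : p ≠ p0 u v) {q : ℕ × ℕ} (hq : q ∈ p.2) : q.1 + q.2 < u + v := by
  obtain ⟨hpos, hu, hv, _⟩ := mem_FF.mp hp
  have h1 : q.1 ≤ (p.2.map Prod.fst).sum :=
    List.single_le_sum (fun x _ => Nat.zero_le x) _ (List.mem_map_of_mem hq)
  have h2 : q.2 ≤ (p.2.map Prod.snd).sum :=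
    List.single_le_sum (fun x _ => Nat.zero_le x) _ (List.mem_map_of_mem hq)
  by_contra hcon
  have hq1 : q.1 = u ∧ q.2 = v := by omega
  have hsum : (p.2.map Prod.fst).sum = q.1 := by omega
  have hl : p.2 = [q] := eq_singleton_of_sum hq (fun r hr => (hpos r hr).1) hsum
  apply hne
  have h0 : p.1.1 = 0 ∧ p.1.2 = 0 := by
    constructor <;> omega
  have hqe : q = (u, v) := Prod.ext hq1.1 hq1.2
  have : p = ((p.1.1, p.1.2), p.2) := rfl
  rw [this, hl, h0.1, h0.2, hqe]
  rfl

lemma sum_FF_split {H : Type*} [Ring H] (Z : ℕ → H) (hZ : Z 0 = 1) (M : ℕ → ℕ → H)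
    {u v : ℕ} (hu : 1 ≤ u) (hv : 1 ≤ v) :
    ∑ p ∈ FF u v, TmG Z M p = M u v + ∑ p ∈ (FF u v).erase (p0 u v), TmG Z M p := by
  rw [← Finset.add_sum_erase _ _ (p0_mem hu hv), TmG_p0 Z hZ]

/-- The recursive construction of the `N_{u,v}`. -/
def Ndef (u v : ℕ) : NSymm :=
  (((u + v).choose u : ℤ)) • Zgen (u + v) -
    ∑ p ∈ ((FF u v).erase (p0 u v)).attach,
      Zgen p.1.1.1 * Zgen p.1.1.2 *
        ((p.1.2.attach.map fun q => Ndef q.1.1 q.1.2).prod)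
termination_by u + v
decreasing_by
  exact entry_lt (Finset.mem_of_mem_erase p.2)
    (Finset.ne_of_mem_erase p.2) q.2

lemma Ndef_eq (u v : ℕ) : Ndef u v = (((u + v).choose u : ℤ)) • Zgen (u + v) -
    ∑ p ∈ (FF u v).erase (p0 u v), TmG Zgen Ndef p := by
  rw [Ndef]
  congr 1
  rw [← Finset.sum_attach ((FF u v).erase (p0 u v)) (TmG Zgen Ndef)]
  refine Finset.sum_congr rfl fun p _ => ?_
  unfold TmG
  congr 1
  congr 1
  exact List.attach_map_val (l := (↑p : (ℕ × ℕ) × List (ℕ × ℕ)).2) (f := fun q : ℕ × ℕ => Ndef q.1 q.2)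

lemma unique_aux {H : Type*} [Ring H] (Z : ℕ → H) (hZ : Z 0 = 1) (M M' : ℕ → ℕ → H)
    (h : ∀ u v : ℕ, 1 ≤ u → 1 ≤ v → ∑ p ∈ FF u v, TmG Z M p = ∑ p ∈ FF u v, TmG Z M' p) :
    ∀ u v : ℕ, 1 ≤ u → 1 ≤ v → M u v = M' u v := by
  suffices H : ∀ n u v : ℕ, u + v ≤ n → 1 ≤ u → 1 ≤ v → M u v = M' u v from
    fun u v hu hv => H (u + v) u v le_rfl hu hv
  intro n
  induction n with
  | zero => intro u v h1 hu hv; omega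
  | succ n ih =>
    intro u v hn hu hv
    have h1 := h u v hu hv
    rw [sum_FF_split Z hZ M hu hv, sum_FF_split Z hZ M' hu hv] at h1
    have h2 : ∑ p ∈ (FF u v).erase (p0 u v), TmG Z M p
        = ∑ p ∈ (FF u v).erase (p0 u v), TmG Z M' p := by
      refine Finset.sum_congr rfl fun p hp => ?_
      unfold TmG
      congr 2
      refine List.map_congr_left fun q hq => ?_
      have hlt := entry_lt (Finset.mem_of_mem_erase hp) (Finset.ne_of_mem_erase hp) hq
      have hpos := (mem_FF.mp (Finset.mem_of_mem_erase hp)).1 q hq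
      exact ih q.1 q.2 (by omega) hpos.1 hpos.2
    rw [h2] at h1
    exact add_right_cancel h1

lemma Ndef_identity : NIdentity Ndef := by
  rw [nidentity_iff]
  intro u v hu hv
  rw [sum_FF_split Zgen rfl Ndef hu hv, Ndef_eq u v]
  abel

/-! ### Homogeneity machinery -/

lemma exists_of_mul_apply_ne {P Q : NSymm} {w : FreeMonoid ℕ}
    (h : (P * Q).coeff w ≠ 0) : ∃ w₁ w₂, w₁ * w₂ = w ∧ P.coeff w₁ ≠ 0 ∧ Q.coeff w₂ ≠ 0 := by
  classical
  by_contra hcon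
  push_neg at hcon
  apply h
  rw [MonoidAlgebra.coeff_mul]
  refine Finset.sum_eq_zero fun a₁ ha₁ => Finset.sum_eq_zero fun a₂ ha₂ => ?_
  by_cases h12 : a₁ * a₂ = w
  · exact absurd (hcon a₁ a₂ h12 (Finsupp.mem_support_iff.mp ha₁))
      (Finsupp.mem_support_iff.mp ha₂)
  · exact if_neg h12

def wlen (w : FreeMonoid ℕ) : ℕ := (FreeMonoid.toList w).length

section Measure

variable (μ : FreeMonoid ℕ → ℕ)

def Homo (P : NSymm) (n : ℕ) : Prop := ∀ w, P.coeff w ≠ 0 → μ w = n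

def LBd (P : NSymm) (k : ℕ) : Prop := ∀ w, P.coeff w ≠ 0 → k ≤ μ w

variable (hμ : ∀ w₁ w₂, μ (w₁ * w₂) = μ w₁ + μ w₂)

include hμ in
lemma mu_one : μ 1 = 0 := by
  have := hμ 1 1
  simp only [one_mul] at this
  omega

include hμ in
lemma homo_one : Homo μ 1 0 := by
  intro w hw
  rw [MonoidAlgebra.one_def, MonoidAlgebra.coeff_single] at hw
  by_cases h : w = 1
  · subst h; exact mu_one μ hμ
  · exact absurd (Finsupp.single_eq_of_ne h) hw

include hμ in
lemma homo_mul {P Q : NSymm} {m n : ℕ} (hP : Homo μ P m) (hQ : Homo μ Q n) :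
    Homo μ (P * Q) (m + n) := by
  intro w hw
  obtain ⟨w₁, w₂, rfl, h1, h2⟩ := exists_of_mul_apply_ne hw
  rw [hμ, hP w₁ h1, hQ w₂ h2]

include hμ in
lemma lbd_mul {P Q : NSymm} {m n : ℕ} (hP : LBd μ P m) (hQ : LBd μ Q n) :
    LBd μ (P * Q) (m + n) := by
  intro w hw
  obtain ⟨w₁, w₂, rfl, h1, h2⟩ := exists_of_mul_apply_ne hw
  rw [hμ]
  exact Nat.add_le_add (hP w₁ h1) (hQ w₂ h2)

include hμ in
lemma homo_listprod {α : Type*} (L : List α) (f : α → NSymm) (g : α → ℕ)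
    (h : ∀ a ∈ L, Homo μ (f a) (g a)) :
    Homo μ ((L.map f).prod) ((L.map g).sum) := by
  induction L with
  | nil => simpa using homo_one μ hμ
  | cons a L ih =>
    simp only [List.map_cons, List.prod_cons, List.sum_cons]
    exact homo_mul μ hμ (h a (by simp)) (ih fun b hb => h b (by simp [hb]))

include hμ in
lemma lbd_listprod {α : Type*} (L : List α) (f : α → NSymm)
    (h : ∀ a ∈ L, LBd μ (f a) 1) : LBd μ ((L.map f).prod) L.length := by
  induction L with
  | nil => intro w hw; exact Nat.zero_le _
  | cons a L ih =>
    simp only [List.map_cons, List.prod_cons, List.length_cons]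
    have := lbd_mul μ hμ (h a (by simp)) (ih fun b hb => h b (by simp [hb]))
    rw [Nat.add_comm] at this
    exact this

end Measure

lemma homo_smul {μ} {P : NSymm} {n : ℕ} (c : ℤ) (hP : Homo μ P n) : Homo μ (c • P) n := by
  intro w hw
  refine hP w fun h => hw ?_
  rw [MonoidAlgebra.coeff_smul_apply, h, smul_zero]

lemma lbd_smul {μ} {P : NSymm} {k : ℕ} (c : ℤ) (hP : LBd μ P k) : LBd μ (c • P) k := by
  intro w hw
  refine hP w fun h => hw ?_
  rw [MonoidAlgebra.coeff_smul_apply, h, smul_zero]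

lemma lbd_neg {μ} {P : NSymm} {k : ℕ} (hP : LBd μ P k) : LBd μ (-P) k := by
  intro w hw
  refine hP w fun h => hw ?_
  rw [MonoidAlgebra.coeff_neg, Finsupp.neg_apply, h, neg_zero]

lemma homo_sub {μ} {P Q : NSymm} {n : ℕ} (hP : Homo μ P n) (hQ : Homo μ Q n) :
    Homo μ (P - Q) n := by
  intro w hw
  rw [MonoidAlgebra.coeff_sub, Finsupp.sub_apply] at hw
  by_cases h : P.coeff w = 0
  · exact hQ w (by rw [h] at hw; simpa using hw)
  · exact hP w h

lemma lbd_sub {μ} {P Q : NSymm} {k : ℕ} (hP : LBd μ P k) (hQ : LBd μ Q k) :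
    LBd μ (P - Q) k := by
  intro w hw
  rw [MonoidAlgebra.coeff_sub, Finsupp.sub_apply] at hw
  by_cases h : P.coeff w = 0
  · exact hQ w (by rw [h] at hw; simpa using hw)
  · exact hP w h

lemma homo_sum {μ} {α : Type*} {s : Finset α} {f : α → NSymm} {n : ℕ}
    (h : ∀ p ∈ s, Homo μ (f p) n) : Homo μ (∑ p ∈ s, f p) n := by
  intro w hw
  rw [MonoidAlgebra.coeff_sum, Finset.sum_apply'] at hw
  obtain ⟨p, hp, hne⟩ := Finset.exists_ne_zero_of_sum_ne_zero hw
  exact h p hp w hne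

lemma lbd_sum {μ} {α : Type*} {s : Finset α} {f : α → NSymm} {k : ℕ}
    (h : ∀ p ∈ s, LBd μ (f p) k) : LBd μ (∑ p ∈ s, f p) k := by
  intro w hw
  rw [MonoidAlgebra.coeff_sum, Finset.sum_apply'] at hw
  obtain ⟨p, hp, hne⟩ := Finset.exists_ne_zero_of_sum_ne_zero hw
  exact h p hp w hne

lemma lbd_mono {μ} {P : NSymm} {k k' : ℕ} (h : k' ≤ k) (hP : LBd μ P k) : LBd μ P k' :=
  fun w hw => le_trans h (hP w hw)

lemma wtWord_mul (w₁ w₂ : FreeMonoid ℕ) : wtWord (w₁ * w₂) = wtWord w₁ + wtWord w₂ := by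
  unfold wtWord
  rw [FreeMonoid.toList_mul, List.sum_append, List.length_append]
  omega

lemma wlen_mul (w₁ w₂ : FreeMonoid ℕ) : wlen (w₁ * w₂) = wlen w₁ + wlen w₂ := by
  unfold wlen
  rw [FreeMonoid.toList_mul, List.length_append]

lemma homo_zgen_wt (n : ℕ) : Homo wtWord (Zgen n) n := by
  cases n with
  | zero => exact homo_one wtWord wtWord_mul
  | succ m =>
    intro w hw
    have : w = FreeMonoid.of m := by
      by_contra h
      exact hw (Finsupp.single_eq_of_ne h)
    subst this
    simp [wtWord, FreeMonoid.toList_of]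

lemma lbd_zgen_len (n : ℕ) (hn : 1 ≤ n) : LBd wlen (Zgen n) 1 := by
  cases n with
  | zero => omega
  | succ m =>
    intro w hw
    have : w = FreeMonoid.of m := by
      by_contra h
      exact hw (Finsupp.single_eq_of_ne h)
    subst this
    simp [wlen, FreeMonoid.toList_of]

lemma sum_map_add (L : List (ℕ × ℕ)) :
    (L.map fun q => q.1 + q.2).sum = (L.map Prod.fst).sum + (L.map Prod.snd).sum := by
  induction L with
  | nil => simp
  | cons a L ih => simp [ih]; omega

lemma isHomog_iff (P : NSymm) (n : ℕ) : IsHomog P n ↔ Homo wtWord P n := Iff.rfl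

lemma N_eq (N : ℕ → ℕ → NSymm) (hN : NIdentity N) {u v : ℕ} (hu : 1 ≤ u) (hv : 1 ≤ v) :
    N u v = ((u + v).choose u : ℤ) • Zgen (u + v) -
      ∑ p ∈ (FF u v).erase (p0 u v), TmG Zgen N p := by
  have h := (nidentity_iff N).mp hN u v hu hv
  rw [sum_FF_split Zgen rfl N hu hv] at h
  rw [h]
  abel

lemma N_parts (N : ℕ → ℕ → NSymm) (hN : NIdentity N) :
    ∀ n u v : ℕ, u + v ≤ n → 1 ≤ u → 1 ≤ v →
      IsHomog (N u v) (u + v) ∧ LBd wlen (N u v) 1 ∧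
      LBd wlen (N u v - ((u + v).choose u : ℤ) • Zgen (u + v)) 2 := by
  intro n
  induction n with
  | zero => intro u v h hu hv; omega
  | succ n ih =>
    intro u v hn hu hv
    have heq := N_eq N hN hu hv
    have hrest2 : LBd wlen (∑ p ∈ (FF u v).erase (p0 u v), TmG Zgen N p) 2 := by
      refine lbd_sum fun p hp => ?_
      have hpFF := Finset.mem_of_mem_erase hp
      have hpne := Finset.ne_of_mem_erase hp
      obtain ⟨hpos, hu', hv', _⟩ := mem_FF.mp hpFF
      have hNq : ∀ q ∈ p.2, LBd wlen (N q.1 q.2) 1 := fun q hq => by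
        have hlt := entry_lt hpFF hpne hq
        exact (ih q.1 q.2 (by omega) (hpos q hq).1 (hpos q hq).2).2.1
      have hprod : LBd wlen ((p.2.map fun q => N q.1 q.2).prod) p.2.length :=
        lbd_listprod wlen wlen_mul p.2 _ hNq
      have hterm : LBd wlen (TmG Zgen N p)
          ((if p.1.1 = 0 then 0 else 1) + (if p.1.2 = 0 then 0 else 1) + p.2.length) := by
        unfold TmG
        refine lbd_mul wlen wlen_mul (lbd_mul wlen wlen_mul ?_ ?_) hprod
        · by_cases h : p.1.1 = 0
          · rw [if_pos h]; intro w hw; exact Nat.zero_le _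
          · rw [if_neg h]; exact lbd_zgen_len _ (by omega)
        · by_cases h : p.1.2 = 0
          · rw [if_pos h]; intro w hw; exact Nat.zero_le _
          · rw [if_neg h]; exact lbd_zgen_len _ (by omega)
      refine lbd_mono ?_ hterm
      rcases hl : p.2 with _ | ⟨q, rest⟩
      · have h1 : p.1.1 = u := by rw [hl] at hu'; simpa using hu'
        have h2 : p.1.2 = v := by rw [hl] at hv'; simpa using hv'
        rw [if_neg (by omega), if_neg (by omega)]
        simp
      · rcases rest with _ | ⟨q2, rest2⟩
        · have h0 : ¬(p.1.1 = 0 ∧ p.1.2 = 0) := by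
            rintro ⟨ha, hb⟩
            apply hpne
            rw [hl] at hu' hv'
            simp only [List.map_cons, List.map_nil, List.sum_cons, List.sum_nil] at hu' hv'
            have hq : q = (u, v) := Prod.ext (by omega) (by omega)
            have : p = ((p.1.1, p.1.2), p.2) := rfl
            rw [this, hl, ha, hb, hq]
            rfl
          simp only [List.length_cons, List.length_nil]
          split_ifs with hA hB hB <;> omega
        · simp only [List.length_cons]
          split_ifs <;> omega
    have hhomrest : Homo wtWord (∑ p ∈ (FF u v).erase (p0 u v), TmG Zgen N p) (u + v) := by
      refine homo_sum fun p hp => ?_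
      have hpFF := Finset.mem_of_mem_erase hp
      have hpne := Finset.ne_of_mem_erase hp
      obtain ⟨hpos, hu', hv', _⟩ := mem_FF.mp hpFF
      have h1 : Homo wtWord (TmG Zgen N p)
          (p.1.1 + p.1.2 + (p.2.map fun q => q.1 + q.2).sum) := by
        unfold TmG
        refine homo_mul wtWord wtWord_mul
          (homo_mul wtWord wtWord_mul (homo_zgen_wt _) (homo_zgen_wt _)) ?_
        refine homo_listprod wtWord wtWord_mul p.2 _ _ fun q hq => ?_
        have hlt := entry_lt hpFF hpne hq
        exact (ih q.1 q.2 (by omega) (hpos q hq).1 (hpos q hq).2).1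
      have h2 : p.1.1 + p.1.2 + (p.2.map fun q => q.1 + q.2).sum = u + v := by
        rw [sum_map_add]; omega
      rw [h2] at h1
      exact h1
    refine ⟨?_, ?_, ?_⟩
    · rw [isHomog_iff, heq]
      exact homo_sub (homo_smul _ (homo_zgen_wt (u + v))) hhomrest
    · rw [heq]
      exact lbd_sub (lbd_smul _ (lbd_zgen_len (u + v) (by omega))) (lbd_mono (by omega) hrest2)
    · have heq2 : N u v - ((u + v).choose u : ℤ) • Zgen (u + v) =
          -∑ p ∈ (FF u v).erase (p0 u v), TmG Zgen N p := by
        rw [heq]; abel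
      rw [heq2]
      exact lbd_neg hrest2

/-! ### reduceP arithmetic -/

lemma wlLt_irrefl (k : ℕ × ℕ) : ¬ wlLt k k := by unfold wlLt; omega

lemma reduceP_fst_pos {q : ℕ × ℕ} (h1 : 0 < q.1) (h2 : 0 < q.2) : 0 < (reduceP q).1 :=
  Nat.div_pos (Nat.le_of_dvd h1 (Nat.gcd_dvd_left _ _)) (Nat.gcd_pos_of_pos_left _ h1)

lemma reduceP_snd_pos {q : ℕ × ℕ} (h1 : 0 < q.1) (h2 : 0 < q.2) : 0 < (reduceP q).2 :=
  Nat.div_pos (Nat.le_of_dvd h2 (Nat.gcd_dvd_right _ _)) (Nat.gcd_pos_of_pos_left _ h1)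

lemma reduceP_coprime {q : ℕ × ℕ} (h1 : 0 < q.1) :
    Nat.gcd (reduceP q).1 (reduceP q).2 = 1 :=
  Nat.coprime_div_gcd_div_gcd (Nat.gcd_pos_of_pos_left _ h1)

lemma reduceP_mul_fst {q : ℕ × ℕ} : Nat.gcd q.1 q.2 * (reduceP q).1 = q.1 :=
  Nat.mul_div_cancel' (Nat.gcd_dvd_left _ _)

lemma reduceP_mul_snd {q : ℕ × ℕ} : Nat.gcd q.1 q.2 * (reduceP q).2 = q.2 :=
  Nat.mul_div_cancel' (Nat.gcd_dvd_right _ _)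

lemma gcd_smul {a b j : ℕ} (hab : Nat.gcd a b = 1) :
    Nat.gcd (j * a) (j * b) = j := by
  rw [Nat.gcd_mul_left, hab, Nat.mul_one]

lemma reduceP_smul {a b j : ℕ} (hab : Nat.gcd a b = 1) (hj : 0 < j) :
    reduceP (j * a, j * b) = (a, b) := by
  unfold reduceP
  simp only
  rw [gcd_smul hab]
  exact Prod.ext (Nat.mul_div_cancel_left a hj) (Nat.mul_div_cancel_left b hj)

/-! ### Splittings of a list -/

def pre (j a b : ℕ) (T : List (ℕ × ℕ)) : List (ℕ × ℕ) :=
  if j = 0 then T else (j * a, j * b) :: T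

def splits : List (ℕ × ℕ) → Finset (List (ℕ × ℕ) × List (ℕ × ℕ))
  | [] => {([], [])}
  | q :: L => (Finset.range (Nat.gcd q.1 q.2 + 1)).biUnion fun j =>
      (splits L).image fun T =>
        (pre j (reduceP q).1 (reduceP q).2 T.1,
         pre (Nat.gcd q.1 q.2 - j) (reduceP q).1 (reduceP q).2 T.2)

lemma pre_injective (j a b : ℕ) : Function.Injective (pre j a b) := by
  unfold pre
  split
  · exact fun x y h => h
  · exact fun x y h => List.tail_eq_of_cons_eq h

lemma pre_map_fst_sum (j a b : ℕ) (T : List (ℕ × ℕ)) :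
    ((pre j a b T).map Prod.fst).sum = j * a + (T.map Prod.fst).sum := by
  unfold pre
  split
  · subst ‹j = 0›; simp
  · simp

lemma pre_map_snd_sum (j a b : ℕ) (T : List (ℕ × ℕ)) :
    ((pre j a b T).map Prod.snd).sum = j * b + (T.map Prod.snd).sum := by
  unfold pre
  split
  · subst ‹j = 0›; simp
  · simp

lemma pre_mem {j a b : ℕ} {T : List (ℕ × ℕ)} {r : ℕ × ℕ} (hr : r ∈ pre j a b T) :
    r ∈ T ∨ (0 < j ∧ r = (j * a, j * b)) := by
  unfold pre at hr
  split at hr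
  · exact Or.inl hr
  · rcases List.mem_cons.mp hr with h | h
    · exact Or.inr ⟨Nat.pos_of_ne_zero ‹¬ j = 0›, h⟩
    · exact Or.inl h

lemma pre_map_reduceP_sublist {j a b : ℕ} (hab : Nat.gcd a b = 1) (T : List (ℕ × ℕ)) :
    List.Sublist ((pre j a b T).map reduceP) ((a, b) :: T.map reduceP) := by
  unfold pre
  split
  · exact List.sublist_cons_self _ _
  · rw [List.map_cons, reduceP_smul hab (Nat.pos_of_ne_zero ‹¬ j = 0›)]

lemma splits_spec : ∀ {L : List (ℕ × ℕ)}, (∀ q ∈ L, 0 < q.1 ∧ 0 < q.2) →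
    ∀ {T : List (ℕ × ℕ) × List (ℕ × ℕ)}, T ∈ splits L →
    (∀ r ∈ T.1, 0 < r.1 ∧ 0 < r.2) ∧ (∀ r ∈ T.2, 0 < r.1 ∧ 0 < r.2) ∧
    List.Sublist (T.1.map reduceP) (L.map reduceP) ∧ List.Sublist (T.2.map reduceP) (L.map reduceP) ∧
    (T.1.map Prod.fst).sum + (T.2.map Prod.fst).sum = (L.map Prod.fst).sum ∧
    (T.1.map Prod.snd).sum + (T.2.map Prod.snd).sum = (L.map Prod.snd).sum := by
  intro L
  induction L with
  | nil =>
    intro _ T hT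
    simp only [splits, Finset.mem_singleton] at hT
    subst hT
    simp
  | cons q L ih =>
    intro hpos T hT
    simp only [splits, Finset.mem_biUnion, Finset.mem_image, Finset.mem_range] at hT
    obtain ⟨j, hj, T', hT', rfl⟩ := hT
    have hq := hpos q (by simp)
    have ha : 0 < (reduceP q).1 := reduceP_fst_pos hq.1 hq.2
    have hb : 0 < (reduceP q).2 := reduceP_snd_pos hq.1 hq.2
    have hab : Nat.gcd (reduceP q).1 (reduceP q).2 = 1 := reduceP_coprime hq.1
    obtain ⟨ih1, ih2, ih3, ih4, ih5, ih6⟩ := ih (fun r hr => hpos r (by simp [hr])) hT'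
    have hposgen : ∀ (k : ℕ) (X : List (ℕ × ℕ)), (∀ r ∈ X, 0 < r.1 ∧ 0 < r.2) →
        ∀ r ∈ pre k (reduceP q).1 (reduceP q).2 X, 0 < r.1 ∧ 0 < r.2 := by
      intro k X hX r hr
      rcases pre_mem hr with h | ⟨hk, rfl⟩
      · exact hX r h
      · exact ⟨Nat.mul_pos hk ha, Nat.mul_pos hk hb⟩
    refine ⟨hposgen j _ ih1, hposgen _ _ ih2, ?_, ?_, ?_, ?_⟩
    · exact (pre_map_reduceP_sublist hab T'.1).trans
        (by rw [List.map_cons]; exact List.Sublist.cons₂ _ ih3)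
    · exact (pre_map_reduceP_sublist hab T'.2).trans
        (by rw [List.map_cons]; exact List.Sublist.cons₂ _ ih4)
    · rw [pre_map_fst_sum, pre_map_fst_sum, List.map_cons, List.sum_cons]
      have : j * (reduceP q).1 + (Nat.gcd q.1 q.2 - j) * (reduceP q).1 = q.1 := by
        rw [← Nat.add_mul]
        have hjg : j + (Nat.gcd q.1 q.2 - j) = Nat.gcd q.1 q.2 := by omega
        rw [hjg]
        exact reduceP_mul_fst
      omega
    · rw [pre_map_snd_sum, pre_map_snd_sum, List.map_cons, List.sum_cons]
      have : j * (reduceP q).2 + (Nat.gcd q.1 q.2 - j) * (reduceP q).2 = q.2 := by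
        rw [← Nat.add_mul]
        have hjg : j + (Nat.gcd q.1 q.2 - j) = Nat.gcd q.1 q.2 := by omega
        rw [hjg]
        exact reduceP_mul_snd
      omega

/-- Recover the split index from the first component. -/
def headKeyVal (k : ℕ × ℕ) : List (ℕ × ℕ) → ℕ
  | [] => 0
  | r :: _ => if reduceP r = k then r.1 else 0

lemma headKeyVal_of_not_mem {k : ℕ × ℕ} {A : List (ℕ × ℕ)}
    (h : k ∉ A.map reduceP) : headKeyVal k A = 0 := by
  cases A with
  | nil => rfl
  | cons r A =>
    simp only [List.map_cons, List.mem_cons, not_or] at h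
    simp only [headKeyVal, if_neg (fun hh : reduceP r = k => h.1 hh.symm)]

lemma headKeyVal_pre {q : ℕ × ℕ} {L : List (ℕ × ℕ)}
    (hq : 0 < q.1 ∧ 0 < q.2)
    (hkey : ∀ k ∈ L.map reduceP, wlLt (reduceP q) k)
    {A : List (ℕ × ℕ)} (hA : List.Sublist (A.map reduceP) (L.map reduceP)) (j : ℕ) :
    headKeyVal (reduceP q) (pre j (reduceP q).1 (reduceP q).2 A) = j * (reduceP q).1 := by
  have hnot : reduceP q ∉ A.map reduceP := fun hmem => by
    exact wlLt_irrefl _ (hkey _ (hA.mem hmem))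
  unfold pre
  split
  · subst ‹j = 0›
    rw [headKeyVal_of_not_mem hnot, Nat.zero_mul]
  · have hj : 0 < j := Nat.pos_of_ne_zero ‹¬ j = 0›
    simp only [headKeyVal]
    rw [if_pos (reduceP_smul (reduceP_coprime hq.1) hj)]

/-- Decompose a sum over the splittings of `q :: L`. -/
lemma sum_splits_cons {β : Type*} [AddCommMonoid β] {q : ℕ × ℕ} {L : List (ℕ × ℕ)}
    (hpos : ∀ r ∈ q :: L, 0 < r.1 ∧ 0 < r.2)
    (hsort : ((q :: L).map reduceP).Pairwise wlLt)
    (f : List (ℕ × ℕ) × List (ℕ × ℕ) → β) :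
    ∑ T ∈ splits (q :: L), f T =
      ∑ j ∈ Finset.range (Nat.gcd q.1 q.2 + 1), ∑ T ∈ splits L,
        f (pre j (reduceP q).1 (reduceP q).2 T.1,
           pre (Nat.gcd q.1 q.2 - j) (reduceP q).1 (reduceP q).2 T.2) := by
  have hq := hpos q (by simp)
  have hLpos : ∀ r ∈ L, 0 < r.1 ∧ 0 < r.2 := fun r hr => hpos r (by simp [hr])
  have hkey : ∀ k ∈ L.map reduceP, wlLt (reduceP q) k := by
    rw [List.map_cons, List.pairwise_cons] at hsort
    exact hsort.1
  have ha : 0 < (reduceP q).1 := reduceP_fst_pos hq.1 hq.2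
  rw [show splits (q :: L) = (Finset.range (Nat.gcd q.1 q.2 + 1)).biUnion fun j =>
      (splits L).image fun T =>
        (pre j (reduceP q).1 (reduceP q).2 T.1,
         pre (Nat.gcd q.1 q.2 - j) (reduceP q).1 (reduceP q).2 T.2) from rfl]
  rw [Finset.sum_biUnion]
  · refine Finset.sum_congr rfl fun j _ => ?_
    rw [Finset.sum_image]
    intro x hx y hy hxy
    have h1 := pre_injective _ _ _ (congrArg Prod.fst hxy)
    have h2 := pre_injective _ _ _ (congrArg Prod.snd hxy)
    exact Prod.ext h1 h2
  · intro j hj j' hj' hne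
    simp only [Function.onFun]
    rw [Finset.disjoint_left]
    intro x hx hx'
    simp only [Finset.mem_image] at hx hx'
    obtain ⟨T, hT, rfl⟩ := hx
    obtain ⟨T', hT', heq⟩ := hx'
    apply hne
    have s1 := (splits_spec hLpos hT).2.2.1
    have s2 := (splits_spec hLpos hT').2.2.1
    have e1 := headKeyVal_pre hq hkey s1 j
    have e2 := headKeyVal_pre hq hkey s2 j'
    have hcomp : pre j' (reduceP q).1 (reduceP q).2 T'.1
        = pre j (reduceP q).1 (reduceP q).2 T.1 := congrArg Prod.fst heq
    rw [hcomp, e1] at e2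
    exact (Nat.mul_left_inj (by omega)).mp e2

/-- `N` extended by `1` at `(0,0)`. -/
def Nex (N : ℕ → ℕ → NSymm) (a b : ℕ) : NSymm := if a = 0 ∧ b = 0 then 1 else N a b

/-- The candidate for `Δ N_{u,v}`. -/
def Mdef (N : ℕ → ℕ → NSymm) (u v : ℕ) : NSymm ⊗[ℤ] NSymm :=
  ∑ j ∈ Finset.range (Nat.gcd u v + 1),
    Nex N (j * (u / Nat.gcd u v)) (j * (v / Nat.gcd u v)) ⊗ₜ[ℤ]
    Nex N ((Nat.gcd u v - j) * (u / Nat.gcd u v)) ((Nat.gcd u v - j) * (v / Nat.gcd u v))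

lemma prod_map_pre (N : ℕ → ℕ → NSymm) {a : ℕ} (b : ℕ) (ha : 0 < a) (j : ℕ)
    (T : List (ℕ × ℕ)) :
    ((pre j a b T).map fun q => N q.1 q.2).prod =
      Nex N (j * a) (j * b) * ((T.map fun q => N q.1 q.2).prod) := by
  unfold pre Nex
  split
  · subst ‹j = 0›
    rw [if_pos ⟨Nat.zero_mul a, Nat.zero_mul b⟩, one_mul]
  · have hj : 0 < j := Nat.pos_of_ne_zero ‹¬ j = 0›
    rw [if_neg (fun hcon => absurd hcon.1 (Nat.mul_ne_zero (by omega) (by omega)))]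
    simp

/-- Expansion of a product of `Mdef`s into splittings. -/
lemma Mdef_prod (N : ℕ → ℕ → NSymm) : ∀ (L : List (ℕ × ℕ)),
    (∀ r ∈ L, 0 < r.1 ∧ 0 < r.2) → ((L.map reduceP).Pairwise wlLt) →
    ((L.map fun q => Mdef N q.1 q.2).prod : NSymm ⊗[ℤ] NSymm) =
      ∑ T ∈ splits L,
        ((T.1.map fun q => N q.1 q.2).prod) ⊗ₜ[ℤ] ((T.2.map fun q => N q.1 q.2).prod) := by
  intro L
  induction L with
  | nil =>
    intro _ _
    simp [splits, Algebra.TensorProduct.one_def]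
  | cons q L ih =>
    intro hpos hsort
    have hq := hpos q (by simp)
    have hLpos : ∀ r ∈ L, 0 < r.1 ∧ 0 < r.2 := fun r hr => hpos r (by simp [hr])
    have hLsort : (L.map reduceP).Pairwise wlLt := by
      rw [List.map_cons, List.pairwise_cons] at hsort
      exact hsort.2
    have ha : 0 < (reduceP q).1 := reduceP_fst_pos hq.1 hq.2
    rw [sum_splits_cons hpos hsort]
    rw [List.map_cons, List.prod_cons, ih hLpos hLsort]
    rw [show Mdef N q.1 q.2 = ∑ j ∈ Finset.range (Nat.gcd q.1 q.2 + 1),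
        Nex N (j * (reduceP q).1) (j * (reduceP q).2) ⊗ₜ[ℤ]
        Nex N ((Nat.gcd q.1 q.2 - j) * (reduceP q).1)
          ((Nat.gcd q.1 q.2 - j) * (reduceP q).2) from rfl]
    rw [Finset.sum_mul_sum]
    refine Finset.sum_congr rfl fun j _ => Finset.sum_congr rfl fun T _ => ?_
    rw [Algebra.TensorProduct.tmul_mul_tmul]
    rw [prod_map_pre N _ ha, prod_map_pre N _ ha]

/-! ### Merging two key-sorted lists -/

def mergeL : List (ℕ × ℕ) → List (ℕ × ℕ) → List (ℕ × ℕ)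
  | [], L₂ => L₂
  | L₁, [] => L₁
  | q₁ :: T₁, q₂ :: T₂ =>
    if reduceP q₁ = reduceP q₂ then (q₁.1 + q₂.1, q₁.2 + q₂.2) :: mergeL T₁ T₂
    else if wlLt (reduceP q₁) (reduceP q₂) then q₁ :: mergeL T₁ (q₂ :: T₂)
    else q₂ :: mergeL (q₁ :: T₁) T₂
termination_by L₁ L₂ => L₁.length + L₂.length

lemma mergeL_nil_left (L : List (ℕ × ℕ)) : mergeL [] L = L := by
  rw [mergeL]

lemma mergeL_nil_right (L : List (ℕ × ℕ)) : mergeL L [] = L := by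
  cases L with
  | nil => rw [mergeL]
  | cons q T => rw [mergeL.eq_2] <;> simp

lemma mergeL_cons_cons (q₁ q₂ : ℕ × ℕ) (T₁ T₂ : List (ℕ × ℕ)) :
    mergeL (q₁ :: T₁) (q₂ :: T₂) =
      if reduceP q₁ = reduceP q₂ then (q₁.1 + q₂.1, q₁.2 + q₂.2) :: mergeL T₁ T₂
      else if wlLt (reduceP q₁) (reduceP q₂) then q₁ :: mergeL T₁ (q₂ :: T₂)
      else q₂ :: mergeL (q₁ :: T₁) T₂ := by
  rw [mergeL]

lemma wlLt_total {k k' : ℕ × ℕ} (h : k ≠ k') : wlLt k k' ∨ wlLt k' k := by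
  rcases k with ⟨a, b⟩
  rcases k' with ⟨c, d⟩
  have h' : ¬(a = c ∧ b = d) := fun hh => h (Prod.ext hh.1 hh.2)
  dsimp [wlLt]
  omega

lemma reduceP_add {q₁ q₂ : ℕ × ℕ} (h₁ : 0 < q₁.1 ∧ 0 < q₁.2) (h₂ : 0 < q₂.1 ∧ 0 < q₂.2)
    (hk : reduceP q₁ = reduceP q₂) :
    reduceP (q₁.1 + q₂.1, q₁.2 + q₂.2) = reduceP q₁ := by
  have e1 : q₁.1 = Nat.gcd q₁.1 q₁.2 * (reduceP q₁).1 := reduceP_mul_fst.symm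
  have e2 : q₁.2 = Nat.gcd q₁.1 q₁.2 * (reduceP q₁).2 := reduceP_mul_snd.symm
  have e3 : q₂.1 = Nat.gcd q₂.1 q₂.2 * (reduceP q₁).1 := by rw [hk]; exact reduceP_mul_fst.symm
  have e4 : q₂.2 = Nat.gcd q₂.1 q₂.2 * (reduceP q₁).2 := by rw [hk]; exact reduceP_mul_snd.symm
  have hsum1 : q₁.1 + q₂.1 = (Nat.gcd q₁.1 q₁.2 + Nat.gcd q₂.1 q₂.2) * (reduceP q₁).1 := by
    rw [Nat.add_mul]; omega
  have hsum2 : q₁.2 + q₂.2 = (Nat.gcd q₁.1 q₁.2 + Nat.gcd q₂.1 q₂.2) * (reduceP q₁).2 := by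
    rw [Nat.add_mul]; omega
  have hg : 0 < Nat.gcd q₁.1 q₁.2 := Nat.gcd_pos_of_pos_left _ h₁.1
  have := reduceP_smul (a := (reduceP q₁).1) (b := (reduceP q₁).2)
    (reduceP_coprime h₁.1) (j := Nat.gcd q₁.1 q₁.2 + Nat.gcd q₂.1 q₂.2) (by omega)
  rw [hsum1, hsum2]
  rw [show reduceP q₁ = ((reduceP q₁).1, (reduceP q₁).2) from rfl]
  exact this

lemma mergeL_keys : ∀ (L₁ L₂ : List (ℕ × ℕ)), (∀ r ∈ L₁, 0 < r.1 ∧ 0 < r.2) →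
    (∀ r ∈ L₂, 0 < r.1 ∧ 0 < r.2) →
    ∀ k ∈ (mergeL L₁ L₂).map reduceP, k ∈ L₁.map reduceP ∨ k ∈ L₂.map reduceP
  | [], L₂ => by intro _ _ k hk; rw [mergeL_nil_left] at hk; exact Or.inr hk
  | q₁ :: T₁, [] => by intro _ _ k hk; rw [mergeL_nil_right] at hk; exact Or.inl hk
  | q₁ :: T₁, q₂ :: T₂ => by
    intro h₁ h₂ k hk
    rw [mergeL_cons_cons] at hk
    have hq₁ := h₁ q₁ (by simp)
    have hq₂ := h₂ q₂ (by simp)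
    have hT₁ : ∀ r ∈ T₁, 0 < r.1 ∧ 0 < r.2 := fun r hr => h₁ r (by simp [hr])
    have hT₂ : ∀ r ∈ T₂, 0 < r.1 ∧ 0 < r.2 := fun r hr => h₂ r (by simp [hr])
    split at hk
    · rcases List.mem_map.mp hk with ⟨r, hr, rfl⟩
      rcases List.mem_cons.mp hr with rfl | hr'
      · left
        rw [reduceP_add hq₁ hq₂ ‹reduceP q₁ = reduceP q₂›]
        simp
      · rcases mergeL_keys T₁ T₂ hT₁ hT₂ _ (List.mem_map_of_mem hr') with h | h
        · exact Or.inl (by simp [h])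
        · exact Or.inr (by simp [h])
    · split at hk
      · rcases List.mem_map.mp hk with ⟨r, hr, rfl⟩
        rcases List.mem_cons.mp hr with rfl | hr'
        · exact Or.inl (by simp)
        · rcases mergeL_keys T₁ (q₂ :: T₂) hT₁ h₂ _ (List.mem_map_of_mem hr') with h | h
          · exact Or.inl (by simp [h])
          · exact Or.inr h
      · rcases List.mem_map.mp hk with ⟨r, hr, rfl⟩
        rcases List.mem_cons.mp hr with rfl | hr'
        · exact Or.inr (by simp)
        · rcases mergeL_keys (q₁ :: T₁) T₂ h₁ hT₂ _ (List.mem_map_of_mem hr') with h | h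
          · exact Or.inl h
          · exact Or.inr (by simp [h])
  termination_by L₁ L₂ => L₁.length + L₂.length

lemma mergeL_pos : ∀ (L₁ L₂ : List (ℕ × ℕ)), (∀ r ∈ L₁, 0 < r.1 ∧ 0 < r.2) →
    (∀ r ∈ L₂, 0 < r.1 ∧ 0 < r.2) → ∀ r ∈ mergeL L₁ L₂, 0 < r.1 ∧ 0 < r.2
  | [], L₂ => by intro _ h₂ r hr; rw [mergeL_nil_left] at hr; exact h₂ r hr
  | q₁ :: T₁, [] => by intro h₁ _ r hr; rw [mergeL_nil_right] at hr; exact h₁ r hr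
  | q₁ :: T₁, q₂ :: T₂ => by
    intro h₁ h₂ r hr
    rw [mergeL_cons_cons] at hr
    have hq₁ := h₁ q₁ (by simp)
    have hq₂ := h₂ q₂ (by simp)
    have hT₁ : ∀ r ∈ T₁, 0 < r.1 ∧ 0 < r.2 := fun r hr => h₁ r (by simp [hr])
    have hT₂ : ∀ r ∈ T₂, 0 < r.1 ∧ 0 < r.2 := fun r hr => h₂ r (by simp [hr])
    split at hr
    · rcases List.mem_cons.mp hr with rfl | hr'
      · exact ⟨by simp; omega, by simp; omega⟩
      · exact mergeL_pos T₁ T₂ hT₁ hT₂ r hr'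
    · split at hr
      · rcases List.mem_cons.mp hr with rfl | hr'
        · exact hq₁
        · exact mergeL_pos T₁ (q₂ :: T₂) hT₁ h₂ r hr'
      · rcases List.mem_cons.mp hr with rfl | hr'
        · exact hq₂
        · exact mergeL_pos (q₁ :: T₁) T₂ h₁ hT₂ r hr'
  termination_by L₁ L₂ => L₁.length + L₂.length

lemma mergeL_sum_fst : ∀ (L₁ L₂ : List (ℕ × ℕ)),
    ((mergeL L₁ L₂).map Prod.fst).sum = (L₁.map Prod.fst).sum + (L₂.map Prod.fst).sum
  | [], L₂ => by rw [mergeL_nil_left]; simp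
  | q₁ :: T₁, [] => by rw [mergeL_nil_right]; simp
  | q₁ :: T₁, q₂ :: T₂ => by
    rw [mergeL_cons_cons]
    split
    · simp only [List.map_cons, List.sum_cons, mergeL_sum_fst T₁ T₂]; omega
    · split
      · simp only [List.map_cons, List.sum_cons, mergeL_sum_fst T₁ (q₂ :: T₂),
          List.map_cons, List.sum_cons]; omega
      · simp only [List.map_cons, List.sum_cons, mergeL_sum_fst (q₁ :: T₁) T₂,
          List.map_cons, List.sum_cons]; omega
  termination_by L₁ L₂ => L₁.length + L₂.length

lemma mergeL_sum_snd : ∀ (L₁ L₂ : List (ℕ × ℕ)),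
    ((mergeL L₁ L₂).map Prod.snd).sum = (L₁.map Prod.snd).sum + (L₂.map Prod.snd).sum
  | [], L₂ => by rw [mergeL_nil_left]; simp
  | q₁ :: T₁, [] => by rw [mergeL_nil_right]; simp
  | q₁ :: T₁, q₂ :: T₂ => by
    rw [mergeL_cons_cons]
    split
    · simp only [List.map_cons, List.sum_cons, mergeL_sum_snd T₁ T₂]; omega
    · split
      · simp only [List.map_cons, List.sum_cons, mergeL_sum_snd T₁ (q₂ :: T₂),
          List.map_cons, List.sum_cons]; omega
      · simp only [List.map_cons, List.sum_cons, mergeL_sum_snd (q₁ :: T₁) T₂,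
          List.map_cons, List.sum_cons]; omega
  termination_by L₁ L₂ => L₁.length + L₂.length

lemma wlLt_trans {a b c : ℕ × ℕ} (h1 : wlLt a b) (h2 : wlLt b c) : wlLt a c := by
  dsimp [wlLt] at *
  omega

lemma wlLt_asymm {a b : ℕ × ℕ} (h1 : wlLt a b) : ¬ wlLt b a := by
  dsimp [wlLt] at *
  omega

lemma mergeL_sorted : ∀ (L₁ L₂ : List (ℕ × ℕ)), (∀ r ∈ L₁, 0 < r.1 ∧ 0 < r.2) →
    (∀ r ∈ L₂, 0 < r.1 ∧ 0 < r.2) →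
    (L₁.map reduceP).Pairwise wlLt → (L₂.map reduceP).Pairwise wlLt →
    ((mergeL L₁ L₂).map reduceP).Pairwise wlLt
  | [], L₂ => by intro _ _ _ h; rw [mergeL_nil_left]; exact h
  | q₁ :: T₁, [] => by intro _ _ h _; rw [mergeL_nil_right]; exact h
  | q₁ :: T₁, q₂ :: T₂ => by
    intro h₁ h₂ s₁ s₂
    have hq₁ := h₁ q₁ (by simp)
    have hq₂ := h₂ q₂ (by simp)
    have hT₁ : ∀ r ∈ T₁, 0 < r.1 ∧ 0 < r.2 := fun r hr => h₁ r (by simp [hr])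
    have hT₂ : ∀ r ∈ T₂, 0 < r.1 ∧ 0 < r.2 := fun r hr => h₂ r (by simp [hr])
    rw [List.map_cons, List.pairwise_cons] at s₁ s₂
    rw [mergeL_cons_cons]
    split
    · rename_i hk
      rw [List.map_cons, List.pairwise_cons]
      constructor
      · intro k hk'
        rw [reduceP_add hq₁ hq₂ hk]
        rcases mergeL_keys T₁ T₂ hT₁ hT₂ k hk' with h | h
        · exact s₁.1 k h
        · exact hk ▸ s₂.1 k h
      · exact mergeL_sorted T₁ T₂ hT₁ hT₂ s₁.2 s₂.2
    · split
      · rename_i hk hlt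
        rw [List.map_cons, List.pairwise_cons]
        constructor
        · intro k hk'
          rcases mergeL_keys T₁ (q₂ :: T₂) hT₁ h₂ k hk' with h | h
          · exact s₁.1 k h
          · rw [List.map_cons, List.mem_cons] at h
            rcases h with rfl | h
            · exact hlt
            · exact wlLt_trans hlt (s₂.1 k h)
        · exact mergeL_sorted T₁ (q₂ :: T₂) hT₁ h₂ s₁.2
            (by rw [List.map_cons, List.pairwise_cons]; exact s₂)
      · rename_i hk hlt
        have hgt : wlLt (reduceP q₂) (reduceP q₁) := (wlLt_total hk).resolve_left hlt
        rw [List.map_cons, List.pairwise_cons]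
        constructor
        · intro k hk'
          rcases mergeL_keys (q₁ :: T₁) T₂ h₁ hT₂ k hk' with h | h
          · rw [List.map_cons, List.mem_cons] at h
            rcases h with rfl | h
            · exact hgt
            · exact wlLt_trans hgt (s₁.1 k h)
          · exact s₂.1 k h
        · exact mergeL_sorted (q₁ :: T₁) T₂ h₁ hT₂
            (by rw [List.map_cons, List.pairwise_cons]; exact s₁) s₂.2
  termination_by L₁ L₂ => L₁.length + L₂.length

lemma q_eq_smul {q : ℕ × ℕ} : q = (Nat.gcd q.1 q.2 * (reduceP q).1, Nat.gcd q.1 q.2 * (reduceP q).2) :=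
  Prod.ext reduceP_mul_fst.symm reduceP_mul_snd.symm

lemma pre_gcd_eq {q : ℕ × ℕ} (hq : 0 < q.1) (B : List (ℕ × ℕ)) :
    pre (Nat.gcd q.1 q.2) (reduceP q).1 (reduceP q).2 B = q :: B := by
  unfold pre
  rw [if_neg (Nat.gcd_pos_of_pos_left _ hq).ne']
  rw [reduceP_mul_fst, reduceP_mul_snd]

lemma splits_nil_left : ∀ (L : List (ℕ × ℕ)), (∀ r ∈ L, 0 < r.1 ∧ 0 < r.2) →
    ([], L) ∈ splits L := by
  intro L
  induction L with
  | nil => simp [splits]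
  | cons q L ih =>
    intro hpos
    have hq := hpos q (by simp)
    have hg : 0 < Nat.gcd q.1 q.2 := Nat.gcd_pos_of_pos_left _ hq.1
    simp only [splits, Finset.mem_biUnion, Finset.mem_image, Finset.mem_range]
    refine ⟨0, by omega, ([], L), ih (fun r hr => hpos r (by simp [hr])), ?_⟩
    rw [show Nat.gcd q.1 q.2 - 0 = Nat.gcd q.1 q.2 from rfl]
    rw [pre_gcd_eq hq.1]
    rfl

lemma splits_nil_right : ∀ (L : List (ℕ × ℕ)), (∀ r ∈ L, 0 < r.1 ∧ 0 < r.2) →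
    (L, []) ∈ splits L := by
  intro L
  induction L with
  | nil => simp [splits]
  | cons q L ih =>
    intro hpos
    have hq := hpos q (by simp)
    have hg : 0 < Nat.gcd q.1 q.2 := Nat.gcd_pos_of_pos_left _ hq.1
    simp only [splits, Finset.mem_biUnion, Finset.mem_image, Finset.mem_range]
    refine ⟨Nat.gcd q.1 q.2, by omega, (L, []), ih (fun r hr => hpos r (by simp [hr])), ?_⟩
    rw [pre_gcd_eq hq.1, Nat.sub_self]
    rfl

lemma pre_zero (a b : ℕ) (T : List (ℕ × ℕ)) : pre 0 a b T = T := if_pos rfl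

lemma mem_splits_mergeL : ∀ (L₁ L₂ : List (ℕ × ℕ)), (∀ r ∈ L₁, 0 < r.1 ∧ 0 < r.2) →
    (∀ r ∈ L₂, 0 < r.1 ∧ 0 < r.2) →
    (L₁.map reduceP).Pairwise wlLt → (L₂.map reduceP).Pairwise wlLt →
    (L₁, L₂) ∈ splits (mergeL L₁ L₂)
  | [], L₂ => by
    intro _ h₂ _ _; rw [mergeL_nil_left]; exact splits_nil_left L₂ h₂
  | q₁ :: T₁, [] => by
    intro h₁ _ _ _; rw [mergeL_nil_right]; exact splits_nil_right _ h₁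
  | q₁ :: T₁, q₂ :: T₂ => by
    intro h₁ h₂ s₁ s₂
    have hq₁ := h₁ q₁ (by simp)
    have hq₂ := h₂ q₂ (by simp)
    have hT₁ : ∀ r ∈ T₁, 0 < r.1 ∧ 0 < r.2 := fun r hr => h₁ r (by simp [hr])
    have hT₂ : ∀ r ∈ T₂, 0 < r.1 ∧ 0 < r.2 := fun r hr => h₂ r (by simp [hr])
    rw [List.map_cons, List.pairwise_cons] at s₁ s₂
    rw [mergeL_cons_cons]
    split
    · rename_i hk
      have f1 : Nat.gcd q₁.1 q₁.2 * (reduceP q₁).1 = q₁.1 := reduceP_mul_fst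
      have f2 : Nat.gcd q₂.1 q₂.2 * (reduceP q₁).1 = q₂.1 := by rw [hk]; exact reduceP_mul_fst
      have f3 : Nat.gcd q₁.1 q₁.2 * (reduceP q₁).2 = q₁.2 := reduceP_mul_snd
      have f4 : Nat.gcd q₂.1 q₂.2 * (reduceP q₁).2 = q₂.2 := by rw [hk]; exact reduceP_mul_snd
      have ea : q₁.1 + q₂.1 = (Nat.gcd q₁.1 q₁.2 + Nat.gcd q₂.1 q₂.2) * (reduceP q₁).1 := by
        rw [Nat.add_mul]; omega
      have eb : q₁.2 + q₂.2 = (Nat.gcd q₁.1 q₁.2 + Nat.gcd q₂.1 q₂.2) * (reduceP q₁).2 := by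
        rw [Nat.add_mul]; omega
      have hgs : Nat.gcd (q₁.1 + q₂.1) (q₁.2 + q₂.2)
          = Nat.gcd q₁.1 q₁.2 + Nat.gcd q₂.1 q₂.2 := by
        rw [ea, eb]; exact gcd_smul (reduceP_coprime hq₁.1)
      have hra : reduceP (q₁.1 + q₂.1, q₁.2 + q₂.2) = reduceP q₁ := reduceP_add hq₁ hq₂ hk
      simp only [splits, Finset.mem_biUnion, Finset.mem_range, Finset.mem_image]
      refine ⟨Nat.gcd q₁.1 q₁.2, by rw [hgs]; omega,
        (T₁, T₂), mem_splits_mergeL T₁ T₂ hT₁ hT₂ s₁.2 s₂.2, ?_⟩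
      have h1 : pre (Nat.gcd q₁.1 q₁.2) (reduceP (q₁.1 + q₂.1, q₁.2 + q₂.2)).1
          (reduceP (q₁.1 + q₂.1, q₁.2 + q₂.2)).2 T₁ = q₁ :: T₁ := by
        rw [hra]; exact pre_gcd_eq hq₁.1 T₁
      have h2 : pre (Nat.gcd (q₁.1 + q₂.1) (q₁.2 + q₂.2) - Nat.gcd q₁.1 q₁.2)
          (reduceP (q₁.1 + q₂.1, q₁.2 + q₂.2)).1
          (reduceP (q₁.1 + q₂.1, q₁.2 + q₂.2)).2 T₂ = q₂ :: T₂ := by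
        rw [hgs, Nat.add_sub_cancel_left, hra, hk]; exact pre_gcd_eq hq₂.1 T₂
      rw [h1, h2]
    · split
      · rename_i hk hlt
        simp only [splits, Finset.mem_biUnion, Finset.mem_range, Finset.mem_image]
        refine ⟨Nat.gcd q₁.1 q₁.2, by omega,
          (T₁, q₂ :: T₂), mem_splits_mergeL T₁ (q₂ :: T₂) hT₁ h₂ s₁.2
            (by rw [List.map_cons, List.pairwise_cons]; exact s₂), ?_⟩
        rw [Nat.sub_self, pre_zero, pre_gcd_eq hq₁.1]
      · rename_i hk hlt
        simp only [splits, Finset.mem_biUnion, Finset.mem_range, Finset.mem_image]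
        refine ⟨0, by omega,
          (q₁ :: T₁, T₂), mem_splits_mergeL (q₁ :: T₁) T₂ h₁ hT₂
            (by rw [List.map_cons, List.pairwise_cons]; exact s₁) s₂.2, ?_⟩
        rw [pre_zero, Nat.sub_zero, pre_gcd_eq hq₂.1]
  termination_by L₁ L₂ => L₁.length + L₂.length

lemma mergeL_cons_key_left {q : ℕ × ℕ} (A B : List (ℕ × ℕ))
    (hkA : ∀ k ∈ A.map reduceP, wlLt (reduceP q) k) :
    mergeL A (q :: B) = q :: mergeL A B := by
  cases A with
  | nil => rw [mergeL_nil_left, mergeL_nil_left]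
  | cons r A' =>
    have hlt : wlLt (reduceP q) (reduceP r) := hkA _ (by simp)
    rw [mergeL_cons_cons]
    rw [if_neg (fun hh : reduceP r = reduceP q => wlLt_irrefl _ (hh ▸ hlt))]
    rw [if_neg (wlLt_asymm hlt)]

lemma mergeL_cons_key_right {q : ℕ × ℕ} (A B : List (ℕ × ℕ))
    (hkB : ∀ k ∈ B.map reduceP, wlLt (reduceP q) k) :
    mergeL (q :: A) B = q :: mergeL A B := by
  cases B with
  | nil => rw [mergeL_nil_right, mergeL_nil_right]
  | cons r B' =>
    have hlt : wlLt (reduceP q) (reduceP r) := hkB _ (by simp)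
    rw [mergeL_cons_cons]
    rw [if_neg (fun hh : reduceP q = reduceP r => wlLt_irrefl _ (hh ▸ hlt))]
    rw [if_pos hlt]

lemma mergeL_of_mem_splits : ∀ (L : List (ℕ × ℕ)), (∀ r ∈ L, 0 < r.1 ∧ 0 < r.2) →
    (L.map reduceP).Pairwise wlLt →
    ∀ T ∈ splits L, mergeL T.1 T.2 = L := by
  intro L
  induction L with
  | nil =>
    intro _ _ T hT
    simp only [splits, Finset.mem_singleton] at hT
    subst hT
    exact mergeL_nil_left []
  | cons q L ih =>
    intro hpos hsort T hT
    have hq := hpos q (by simp)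
    have hg : 0 < Nat.gcd q.1 q.2 := Nat.gcd_pos_of_pos_left _ hq.1
    have hLpos : ∀ r ∈ L, 0 < r.1 ∧ 0 < r.2 := fun r hr => hpos r (by simp [hr])
    rw [List.map_cons, List.pairwise_cons] at hsort
    simp only [splits, Finset.mem_biUnion, Finset.mem_range, Finset.mem_image] at hT
    obtain ⟨j, hj, ⟨A, B⟩, hAB, rfl⟩ := hT
    have hIH := ih hLpos hsort.2 (A, B) hAB
    obtain ⟨hApos, hBpos, hAsub, hBsub, _, _⟩ := splits_spec hLpos hAB
    have hkA : ∀ k ∈ A.map reduceP, wlLt (reduceP q) k :=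
      fun k hk => hsort.1 k (hAsub.mem hk)
    have hkB : ∀ k ∈ B.map reduceP, wlLt (reduceP q) k :=
      fun k hk => hsort.1 k (hBsub.mem hk)
    by_cases hj0 : j = 0
    · subst hj0
      rw [pre_zero, Nat.sub_zero, pre_gcd_eq hq.1]
      rw [mergeL_cons_key_left A B hkA, hIH]
    · by_cases hjg : j = Nat.gcd q.1 q.2
      · subst hjg
        rw [Nat.sub_self, pre_zero, pre_gcd_eq hq.1]
        rw [mergeL_cons_key_right A B hkB, hIH]
      · have hj1 : 0 < j := Nat.pos_of_ne_zero hj0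
        have hj2 : j < Nat.gcd q.1 q.2 := by omega
        have hab : Nat.gcd (reduceP q).1 (reduceP q).2 = 1 := reduceP_coprime hq.1
        have e1 : pre j (reduceP q).1 (reduceP q).2 A
            = (j * (reduceP q).1, j * (reduceP q).2) :: A := if_neg hj0
        have e2 : pre (Nat.gcd q.1 q.2 - j) (reduceP q).1 (reduceP q).2 B
            = ((Nat.gcd q.1 q.2 - j) * (reduceP q).1,
               (Nat.gcd q.1 q.2 - j) * (reduceP q).2) :: B := if_neg (by omega)
        rw [e1, e2, mergeL_cons_cons]
        rw [if_pos (by rw [reduceP_smul hab hj1, reduceP_smul hab (by omega)])]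
        rw [hIH]
        have hfst : j * (reduceP q).1 + (Nat.gcd q.1 q.2 - j) * (reduceP q).1 = q.1 := by
          rw [← Nat.add_mul, show j + (Nat.gcd q.1 q.2 - j) = Nat.gcd q.1 q.2 by omega]
          exact reduceP_mul_fst
        have hsnd : j * (reduceP q).2 + (Nat.gcd q.1 q.2 - j) * (reduceP q).2 = q.2 := by
          rw [← Nat.add_mul, show j + (Nat.gcd q.1 q.2 - j) = Nat.gcd q.1 q.2 by omega]
          exact reduceP_mul_snd
        simp only
        rw [hfst, hsnd]

/-! ### Delta computations and the extended identity -/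

lemma Delta_Zgen (n : ℕ) : Delta (Zgen n) =
    ∑ a ∈ Finset.range (n + 1), Zgen a ⊗ₜ[ℤ] Zgen (n - a) := by
  cases n with
  | zero =>
    rw [show Zgen 0 = 1 from rfl, map_one, Finset.sum_range_one]
    rw [show Zgen 0 = 1 from rfl]
    exact Algebra.TensorProduct.one_def
  | succ m =>
    rw [show Zgen (m + 1) = MonoidAlgebra.of ℤ (FreeMonoid ℕ) (FreeMonoid.of m) from rfl]
    unfold Delta
    rw [MonoidAlgebra.lift_of, FreeMonoid.lift_eval_of]

lemma FF_right_zero (u : ℕ) : FF u 0 = {((u, 0), [])} := by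
  ext p
  rw [mem_FF, Finset.mem_singleton]
  constructor
  · rintro ⟨hpos, hu, hv, _⟩
    have hl : p.2 = [] := by
      cases hl2 : p.2 with
      | nil => rfl
      | cons r t =>
        have := hpos r (by rw [hl2]; simp)
        rw [hl2] at hv
        simp only [List.map_cons, List.sum_cons] at hv
        omega
    rw [hl] at hu hv
    simp only [List.map_nil, List.sum_nil, Nat.add_zero] at hu hv
    have hp : p = ((p.1.1, p.1.2), p.2) := rfl
    rw [hp, hl, hu, hv]
  · rintro rfl
    exact ⟨by simp, by simp, by simp, by simp⟩

lemma FF_left_zero (v : ℕ) : FF 0 v = {((0, v), [])} := by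
  ext p
  rw [mem_FF, Finset.mem_singleton]
  constructor
  · rintro ⟨hpos, hu, hv, _⟩
    have hl : p.2 = [] := by
      cases hl2 : p.2 with
      | nil => rfl
      | cons r t =>
        have := hpos r (by rw [hl2]; simp)
        rw [hl2] at hu
        simp only [List.map_cons, List.sum_cons] at hu
        omega
    rw [hl] at hu hv
    simp only [List.map_nil, List.sum_nil, Nat.add_zero] at hu hv
    have hp : p = ((p.1.1, p.1.2), p.2) := rfl
    rw [hp, hl, hu, hv]
  · rintro rfl
    exact ⟨by simp, by simp, by simp, by simp⟩

lemma identity_ext {N : ℕ → ℕ → NSymm} (hN : NIdentity N) (u v : ℕ) :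
    ∑ p ∈ FF u v, TmG Zgen N p = ((u + v).choose u : ℤ) • Zgen (u + v) := by
  rcases Nat.eq_zero_or_pos u with rfl | hu
  · rw [FF_left_zero, Finset.sum_singleton]
    unfold TmG
    simp only [List.map_nil, List.prod_nil, mul_one]
    rw [show Zgen 0 = 1 from rfl, one_mul, Nat.choose_zero_right, Nat.zero_add]
    rw [Int.natCast_one, one_smul]
  · rcases Nat.eq_zero_or_pos v with rfl | hv
    · rw [FF_right_zero, Finset.sum_singleton]
      unfold TmG
      simp only [List.map_nil, List.prod_nil, mul_one]
      rw [show Zgen 0 = 1 from rfl, mul_one, Nat.add_zero, Nat.choose_self]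
      rw [Int.natCast_one, one_smul]
    · exact ((nidentity_iff N).mp hN u v hu hv).symm

lemma Delta_TmG (N : ℕ → ℕ → NSymm) (p : (ℕ × ℕ) × List (ℕ × ℕ)) :
    Delta (TmG Zgen N p) = TmG (fun k => Delta (Zgen k)) (fun a b => Delta (N a b)) p := by
  unfold TmG
  rw [map_mul, map_mul, map_list_prod, List.map_map]
  rfl

lemma Delta_identity {N : ℕ → ℕ → NSymm} (hN : NIdentity N) (u v : ℕ) :
    ∑ p ∈ FF u v, TmG (fun k => Delta (Zgen k)) (fun a b => Delta (N a b)) p =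
      ((u + v).choose u : ℤ) • Delta (Zgen (u + v)) := by
  rw [show ((u + v).choose u : ℤ) • Delta (Zgen (u + v))
      = Delta (((u + v).choose u : ℤ) • Zgen (u + v)) from (map_zsmul Delta _ _).symm]
  rw [← identity_ext hN u v, map_sum]
  exact Finset.sum_congr rfl fun p _ => (Delta_TmG N p).symm

/-! ### The grand bijection -/

lemma TmG_Mdef_expand (N : ℕ → ℕ → NSymm) {u v : ℕ} {p : (ℕ × ℕ) × List (ℕ × ℕ)}
    (hp : p ∈ FF u v) :
    TmG (fun k => Delta (Zgen k)) (Mdef N) p =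
      ∑ i ∈ Finset.range (p.1.1 + 1), ∑ j ∈ Finset.range (p.1.2 + 1), ∑ T ∈ splits p.2,
        (Zgen i * Zgen j * (T.1.map fun q => N q.1 q.2).prod) ⊗ₜ[ℤ]
        (Zgen (p.1.1 - i) * Zgen (p.1.2 - j) * (T.2.map fun q => N q.1 q.2).prod) := by
  obtain ⟨hpos, _, _, hsort⟩ := mem_FF.mp hp
  unfold TmG
  show Delta (Zgen p.1.1) * Delta (Zgen p.1.2) *
    (List.map (fun q => Mdef N q.1 q.2) p.2).prod = _
  rw [Delta_Zgen, Delta_Zgen, Mdef_prod N p.2 hpos hsort]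
  rw [Finset.sum_mul_sum]
  rw [Finset.sum_mul]
  refine Finset.sum_congr rfl fun i _ => ?_
  rw [Finset.sum_mul]
  refine Finset.sum_congr rfl fun j _ => ?_
  rw [Finset.mul_sum]
  refine Finset.sum_congr rfl fun T _ => ?_
  rw [Algebra.TensorProduct.tmul_mul_tmul, Algebra.TensorProduct.tmul_mul_tmul]

abbrev DomT : Type := Σ _ : (ℕ × ℕ) × List (ℕ × ℕ), (ℕ × ℕ) × (List (ℕ × ℕ) × List (ℕ × ℕ))

abbrev CodT : Type := Σ _ : (ℕ × ℕ) × (ℕ × ℕ), ((ℕ × ℕ) × List (ℕ × ℕ)) × ((ℕ × ℕ) × List (ℕ × ℕ))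

def DomS (u v : ℕ) : Finset DomT :=
  (FF u v).sigma fun p => (Finset.range (p.1.1 + 1) ×ˢ Finset.range (p.1.2 + 1)) ×ˢ splits p.2

def CodS (u v : ℕ) : Finset CodT :=
  (Finset.HasAntidiagonal.antidiagonal u ×ˢ Finset.HasAntidiagonal.antidiagonal v).sigma fun x => FF x.1.1 x.2.1 ×ˢ FF x.1.2 x.2.2

def lterm (N : ℕ → ℕ → NSymm) (pc : DomT) : NSymm ⊗[ℤ] NSymm :=
  (Zgen pc.2.1.1 * Zgen pc.2.1.2 * (pc.2.2.1.map fun q => N q.1 q.2).prod) ⊗ₜ[ℤ]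
  (Zgen (pc.1.1.1 - pc.2.1.1) * Zgen (pc.1.1.2 - pc.2.1.2) *
    (pc.2.2.2.map fun q => N q.1 q.2).prod)

def rterm (N : ℕ → ℕ → NSymm) (xy : CodT) : NSymm ⊗[ℤ] NSymm :=
  TmG Zgen N xy.2.1 ⊗ₜ[ℤ] TmG Zgen N xy.2.2

def fmap (pc : DomT) : CodT :=
  ⟨((pc.2.1.1 + (pc.2.2.1.map Prod.fst).sum,
     (pc.1.1.1 - pc.2.1.1) + (pc.2.2.2.map Prod.fst).sum),
    (pc.2.1.2 + (pc.2.2.1.map Prod.snd).sum,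
     (pc.1.1.2 - pc.2.1.2) + (pc.2.2.2.map Prod.snd).sum)),
   (((pc.2.1.1, pc.2.1.2), pc.2.2.1),
    ((pc.1.1.1 - pc.2.1.1, pc.1.1.2 - pc.2.1.2), pc.2.2.2))⟩

def gmap (xy : CodT) : DomT :=
  ⟨((xy.2.1.1.1 + xy.2.2.1.1, xy.2.1.1.2 + xy.2.2.1.2), mergeL xy.2.1.2 xy.2.2.2),
   ((xy.2.1.1.1, xy.2.1.1.2), (xy.2.1.2, xy.2.2.2))⟩

lemma fmap_mem {u v : ℕ} {pc : DomT} (h : pc ∈ DomS u v) : fmap pc ∈ CodS u v := by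
  rcases pc with ⟨⟨⟨u0, v0⟩, L⟩, ⟨⟨i, j⟩, ⟨T₁, T₂⟩⟩⟩
  rw [DomS, Finset.mem_sigma] at h
  obtain ⟨h1, h2⟩ := h
  simp only [Finset.mem_product, Finset.mem_range] at h2
  obtain ⟨⟨hi, hj⟩, hT⟩ := h2
  obtain ⟨hpos, hsum1, hsum2, hsort⟩ := mem_FF.mp h1
  simp only at hpos hsum1 hsum2 hsort hi hj hT
  obtain ⟨pos1, pos2, sub1, sub2, sfst, ssnd⟩ := splits_spec hpos hT
  dsimp only at pos1 pos2 sub1 sub2 sfst ssnd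
  rw [CodS, Finset.mem_sigma]
  constructor
  · simp only [fmap, Finset.mem_product, Finset.HasAntidiagonal.mem_antidiagonal]
    constructor <;> omega
  · simp only [fmap, Finset.mem_product]
    constructor
    · rw [mem_FF]
      exact ⟨pos1, rfl, rfl, List.Pairwise.sublist sub1 hsort⟩
    · rw [mem_FF]
      exact ⟨pos2, rfl, rfl, List.Pairwise.sublist sub2 hsort⟩

lemma gmap_mem {u v : ℕ} {xy : CodT} (h : xy ∈ CodS u v) : gmap xy ∈ DomS u v := by
  rcases xy with ⟨⟨⟨u1, u2⟩, ⟨v1, v2⟩⟩, ⟨⟨⟨i, j⟩, T₁⟩, ⟨⟨i', j'⟩, T₂⟩⟩⟩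
  rw [CodS, Finset.mem_sigma] at h
  obtain ⟨hX, hY⟩ := h
  simp only [Finset.mem_product, Finset.HasAntidiagonal.mem_antidiagonal] at hX
  simp only [Finset.mem_product] at hY
  obtain ⟨hY1, hY2⟩ := hY
  obtain ⟨pos1, e1, e2, sort1⟩ := mem_FF.mp hY1
  obtain ⟨pos2, e3, e4, sort2⟩ := mem_FF.mp hY2
  simp only at pos1 pos2 e1 e2 e3 e4 sort1 sort2 hX
  rw [DomS, Finset.mem_sigma]
  constructor
  · rw [mem_FF]
    refine ⟨mergeL_pos T₁ T₂ pos1 pos2, ?_, ?_, mergeL_sorted T₁ T₂ pos1 pos2 sort1 sort2⟩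
    · simp only [gmap, mergeL_sum_fst]
      omega
    · simp only [gmap, mergeL_sum_snd]
      omega
  · simp only [gmap, Finset.mem_product, Finset.mem_range]
    exact ⟨⟨by omega, by omega⟩, mem_splits_mergeL T₁ T₂ pos1 pos2 sort1 sort2⟩

lemma gmap_fmap {u v : ℕ} {pc : DomT} (h : pc ∈ DomS u v) : gmap (fmap pc) = pc := by
  rcases pc with ⟨⟨⟨u0, v0⟩, L⟩, ⟨⟨i, j⟩, ⟨T₁, T₂⟩⟩⟩
  rw [DomS, Finset.mem_sigma] at h
  obtain ⟨h1, h2⟩ := h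
  simp only [Finset.mem_product, Finset.mem_range] at h2
  obtain ⟨⟨hi, hj⟩, hT⟩ := h2
  obtain ⟨hpos, hsum1, hsum2, hsort⟩ := mem_FF.mp h1
  simp only at hpos hsum1 hsum2 hsort hi hj hT
  refine Sigma.ext ?_ (heq_of_eq rfl)
  show ((i + (u0 - i), j + (v0 - j)), mergeL T₁ T₂) = ((u0, v0), L)
  rw [show i + (u0 - i) = u0 by omega, show j + (v0 - j) = v0 by omega]
  rw [mergeL_of_mem_splits L hpos hsort (T₁, T₂) hT]

lemma fmap_gmap {u v : ℕ} {xy : CodT} (h : xy ∈ CodS u v) : fmap (gmap xy) = xy := by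
  rcases xy with ⟨⟨⟨u1, u2⟩, ⟨v1, v2⟩⟩, ⟨⟨⟨i, j⟩, T₁⟩, ⟨⟨i', j'⟩, T₂⟩⟩⟩
  rw [CodS, Finset.mem_sigma] at h
  obtain ⟨hX, hY⟩ := h
  simp only [Finset.mem_product, Finset.HasAntidiagonal.mem_antidiagonal] at hX
  simp only [Finset.mem_product] at hY
  obtain ⟨hY1, hY2⟩ := hY
  obtain ⟨pos1, e1, e2, sort1⟩ := mem_FF.mp hY1
  obtain ⟨pos2, e3, e4, sort2⟩ := mem_FF.mp hY2
  simp only at pos1 pos2 e1 e2 e3 e4 sort1 sort2 hX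
  simp only [fmap, gmap, Nat.add_sub_cancel_left]
  refine Sigma.ext ?_ (heq_of_eq rfl)
  show ((i + (T₁.map Prod.fst).sum, i' + (T₂.map Prod.fst).sum),
        (j + (T₁.map Prod.snd).sum, j' + (T₂.map Prod.snd).sum)) = ((u1, u2), (v1, v2))
  rw [e1, e2, e3, e4]

lemma lterm_fmap (N : ℕ → ℕ → NSymm) (pc : DomT) : lterm N pc = rterm N (fmap pc) := rfl

lemma sum_FF_Mdef (N : ℕ → ℕ → NSymm) (u v : ℕ) :
    ∑ p ∈ FF u v, TmG (fun k => Delta (Zgen k)) (Mdef N) p =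
      ∑ x ∈ Finset.HasAntidiagonal.antidiagonal u ×ˢ Finset.HasAntidiagonal.antidiagonal v,
        ∑ y ∈ FF x.1.1 x.2.1 ×ˢ FF x.1.2 x.2.2,
          TmG Zgen N y.1 ⊗ₜ[ℤ] TmG Zgen N y.2 := by
  have lhs_eq : ∑ p ∈ FF u v, TmG (fun k => Delta (Zgen k)) (Mdef N) p
      = ∑ pc ∈ DomS u v, lterm N pc := by
    rw [DomS, Finset.sum_sigma]
    refine Finset.sum_congr rfl fun p hp => ?_
    rw [TmG_Mdef_expand N hp, Finset.sum_product, Finset.sum_product]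
    rfl
  have rhs_eq : (∑ x ∈ Finset.HasAntidiagonal.antidiagonal u ×ˢ Finset.HasAntidiagonal.antidiagonal v,
        ∑ y ∈ FF x.1.1 x.2.1 ×ˢ FF x.1.2 x.2.2,
          TmG Zgen N y.1 ⊗ₜ[ℤ] TmG Zgen N y.2)
      = ∑ xy ∈ CodS u v, rterm N xy := by
    rw [CodS, Finset.sum_sigma]
    rfl
  rw [lhs_eq, rhs_eq]
  exact Finset.sum_nbij' fmap gmap (fun a ha => fmap_mem ha) (fun a ha => gmap_mem ha)
    (fun a ha => gmap_fmap ha) (fun a ha => fmap_gmap ha) (fun a _ => lterm_fmap N a)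

/-! ### Vandermonde -/

lemma vandermonde_fiber (u v k : ℕ) (hk : k ≤ u + v) :
    ∑ x ∈ (Finset.HasAntidiagonal.antidiagonal u ×ˢ Finset.HasAntidiagonal.antidiagonal v).filter
        (fun x => (x.1.1 + x.2.1, x.1.2 + x.2.2) = (k, u + v - k)),
      (x.1.1 + x.2.1).choose x.1.1 * (x.1.2 + x.2.2).choose x.1.2
      = (u + v).choose u := by
  have step1 : ∑ x ∈ (Finset.HasAntidiagonal.antidiagonal u ×ˢ Finset.HasAntidiagonal.antidiagonal v).filter
        (fun x => (x.1.1 + x.2.1, x.1.2 + x.2.2) = (k, u + v - k)),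
      (x.1.1 + x.2.1).choose x.1.1 * (x.1.2 + x.2.2).choose x.1.2
      = ∑ w ∈ (Finset.HasAntidiagonal.antidiagonal u).filter (fun w => w.1 ≤ k ∧ k - w.1 ≤ v),
          k.choose w.1 * (u + v - k).choose w.2 := by
    refine Finset.sum_nbij' (fun x => x.1)
      (fun w => ((w.1, w.2), (k - w.1, (u + v - k) - w.2))) ?_ ?_ ?_ ?_ ?_
    · intro x hx
      simp only [Finset.mem_filter, Finset.mem_product, Finset.HasAntidiagonal.mem_antidiagonal,
        Prod.mk.injEq] at hx ⊢
      omega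
    · intro w hw
      simp only [Finset.mem_filter, Finset.HasAntidiagonal.mem_antidiagonal] at hw
      simp only [Finset.mem_filter, Finset.mem_product, Finset.HasAntidiagonal.mem_antidiagonal,
        Prod.mk.injEq]
      omega
    · intro x hx
      simp only [Finset.mem_filter, Finset.mem_product, Finset.HasAntidiagonal.mem_antidiagonal,
        Prod.mk.injEq] at hx
      show ((x.1.1, x.1.2), (k - x.1.1, u + v - k - x.1.2)) = x
      have h1 : k - x.1.1 = x.2.1 := by omega
      have h2 : u + v - k - x.1.2 = x.2.2 := by omega
      rw [h1, h2]
    · intro w hw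
      rfl
    · intro x hx
      simp only [Finset.mem_filter, Finset.mem_product, Finset.HasAntidiagonal.mem_antidiagonal,
        Prod.mk.injEq] at hx
      rw [hx.2.1, hx.2.2]
  rw [step1]
  rw [Finset.sum_filter_of_ne]
  · rw [← Nat.add_choose_eq]
    rw [show k + (u + v - k) = u + v by omega]
  · intro w hw hne
    simp only [Finset.HasAntidiagonal.mem_antidiagonal] at hw
    constructor
    · by_contra hcon
      refine hne ?_
      have h0 : k.choose w.1 = 0 := Nat.choose_eq_zero_of_lt (by omega)
      rw [h0, Nat.zero_mul]
    · by_contra hcon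
      refine hne ?_
      have h0 : (u + v - k).choose w.2 = 0 := Nat.choose_eq_zero_of_lt (by omega)
      rw [h0, Nat.mul_zero]

lemma Mdef_identity {N : ℕ → ℕ → NSymm} (hN : NIdentity N) (u v : ℕ) :
    ((u + v).choose u : ℤ) • Delta (Zgen (u + v)) =
      ∑ p ∈ FF u v, TmG (fun k => Delta (Zgen k)) (Mdef N) p := by
  rw [sum_FF_Mdef N u v]
  have step1 : ∀ x ∈ Finset.HasAntidiagonal.antidiagonal u ×ˢ Finset.HasAntidiagonal.antidiagonal v,
      (∑ y ∈ FF x.1.1 x.2.1 ×ˢ FF x.1.2 x.2.2, TmG Zgen N y.1 ⊗ₜ[ℤ] TmG Zgen N y.2)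
        = (((x.1.1 + x.2.1).choose x.1.1 * (x.1.2 + x.2.2).choose x.1.2 : ℕ) : ℤ) •
            (Zgen (x.1.1 + x.2.1) ⊗ₜ[ℤ] Zgen (x.1.2 + x.2.2)) := by
    intro x _
    rw [Finset.sum_product]
    have e1 : ∀ y1 : (ℕ × ℕ) × List (ℕ × ℕ),
        (∑ y2 ∈ FF x.1.2 x.2.2, TmG Zgen N y1 ⊗ₜ[ℤ] TmG Zgen N y2)
          = TmG Zgen N y1 ⊗ₜ[ℤ] (∑ y2 ∈ FF x.1.2 x.2.2, TmG Zgen N y2) :=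
      fun y1 => (TensorProduct.tmul_sum _ _ _).symm
    rw [Finset.sum_congr rfl (fun y1 _ => e1 y1), ← TensorProduct.sum_tmul]
    rw [identity_ext hN x.1.1 x.2.1, identity_ext hN x.1.2 x.2.2]
    rw [TensorProduct.tmul_smul, TensorProduct.smul_tmul', smul_smul]
    congr 1
    push_cast
    ring
  rw [Finset.sum_congr rfl step1]
  have maps_to : ∀ x ∈ Finset.HasAntidiagonal.antidiagonal u ×ˢ Finset.HasAntidiagonal.antidiagonal v,
      ((x.1.1 + x.2.1, x.1.2 + x.2.2) : ℕ × ℕ) ∈ Finset.HasAntidiagonal.antidiagonal (u + v) := by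
    intro x hx
    simp only [Finset.mem_product, Finset.HasAntidiagonal.mem_antidiagonal] at hx ⊢
    omega
  rw [← Finset.sum_fiberwise_of_maps_to maps_to]
  rw [Delta_Zgen, Finset.smul_sum]
  rw [Finset.Nat.sum_antidiagonal_eq_sum_range_succ_mk]
  refine Finset.sum_congr rfl fun k hk => ?_
  rw [Finset.mem_range] at hk
  have hterm : ∀ x ∈ (Finset.HasAntidiagonal.antidiagonal u ×ˢ Finset.HasAntidiagonal.antidiagonal v).filter
      (fun x => (x.1.1 + x.2.1, x.1.2 + x.2.2) = (k, u + v - k)),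
      (((x.1.1 + x.2.1).choose x.1.1 * (x.1.2 + x.2.2).choose x.1.2 : ℕ) : ℤ) •
        (Zgen (x.1.1 + x.2.1) ⊗ₜ[ℤ] Zgen (x.1.2 + x.2.2))
      = (((x.1.1 + x.2.1).choose x.1.1 * (x.1.2 + x.2.2).choose x.1.2 : ℕ) : ℤ) •
        (Zgen k ⊗ₜ[ℤ] Zgen (u + v - k)) := by
    intro x hx
    simp only [Finset.mem_filter, Prod.mk.injEq] at hx
    rw [hx.2.1, hx.2.2]
  rw [Finset.sum_congr rfl hterm, ← Finset.sum_smul, ← Nat.cast_sum]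
  rw [vandermonde_fiber u v k (by omega)]

lemma Delta_N_eq_Mdef {N : ℕ → ℕ → NSymm} (hN : NIdentity N) {u v : ℕ}
    (hu : 1 ≤ u) (hv : 1 ≤ v) : Delta (N u v) = Mdef N u v := by
  refine unique_aux (fun k => Delta (Zgen k))
    (by show Delta (Zgen 0) = 1; rw [show Zgen 0 = 1 from rfl, map_one])
    (fun a b => Delta (N a b)) (Mdef N) ?_ u v hu hv
  intro u' v' hu' hv'
  rw [Delta_identity hN u' v', ← Mdef_identity hN u' v']

lemma curve_part {N : ℕ → ℕ → NSymm} (hN : NIdentity N) {a b : ℕ} (ha : 1 ≤ a) (hb : 1 ≤ b)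
    (hab : Nat.gcd a b = 1) :
    IsCurveN (fun i => if i = 0 then 1 else N (i * a) (i * b)) := by
  constructor
  · simp
  · intro n
    cases n with
    | zero =>
      show Delta 1 = _
      rw [map_one, Finset.sum_range_one]
      exact Algebra.TensorProduct.one_def
    | succ m =>
      have hn : 0 < m + 1 := Nat.succ_pos m
      have hc : (fun i => if i = 0 then 1 else N (i * a) (i * b)) (m + 1)
          = N ((m + 1) * a) ((m + 1) * b) := by simp
      rw [hc]
      rw [Delta_N_eq_Mdef hN (Nat.mul_pos hn ha) (Nat.mul_pos hn hb)]
      unfold Mdef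
      have hg : Nat.gcd ((m + 1) * a) ((m + 1) * b) = m + 1 := by
        rw [Nat.gcd_mul_left, hab, Nat.mul_one]
      rw [hg]
      have hd1 : (m + 1) * a / (m + 1) = a := Nat.mul_div_cancel_left a hn
      have hd2 : (m + 1) * b / (m + 1) = b := Nat.mul_div_cancel_left b hn
      rw [hd1, hd2]
      refine Finset.sum_congr rfl fun j hj => ?_
      have hcn : ∀ k : ℕ, Nex N (k * a) (k * b)
          = (if k = 0 then 1 else N (k * a) (k * b)) := by
        intro k
        by_cases h : k = 0
        · subst h
          rw [if_pos rfl]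
          unfold Nex
          rw [if_pos ⟨Nat.zero_mul a, Nat.zero_mul b⟩]
        · rw [if_neg h]
          unfold Nex
          rw [if_neg (fun hc2 => h (by
            have := hc2.1
            have hk : 0 < k := Nat.pos_of_ne_zero h
            exact absurd this (Nat.mul_ne_zero (by omega) (by omega))))]
      rw [hcn j, hcn (m + 1 - j)]

end SecondIsobaricAux

/-- Second isobaric decomposition theorem: existence and uniqueness of the `N_{u,v}`,
their leading term, homogeneity, and the curve property. -/
theorem second_isobaric :
    (∃ N : ℕ → ℕ → NSymm, NIdentity N) ∧
    (∀ N N' : ℕ → ℕ → NSymm, NIdentity N → NIdentity N' →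
      ∀ u v : ℕ, 1 ≤ u → 1 ≤ v → N u v = N' u v) ∧
    (∀ N : ℕ → ℕ → NSymm, NIdentity N → ∀ u v : ℕ, 1 ≤ u → 1 ≤ v →
      (∀ w : FreeMonoid ℕ,
        coeffw (N u v - ((u + v).choose u : ℤ) • Zgen (u + v)) w ≠ 0 →
        2 ≤ (FreeMonoid.toList w).length) ∧
      IsHomog (N u v) (u + v)) ∧
    (∀ N : ℕ → ℕ → NSymm, NIdentity N → ∀ a b : ℕ, 1 ≤ a → 1 ≤ b → Nat.gcd a b = 1 →
      IsCurveN (fun i => if i = 0 then 1 else N (i * a) (i * b))) := by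
  refine ⟨⟨SecondIsobaricAux.Ndef, SecondIsobaricAux.Ndef_identity⟩, ?_, ?_, ?_⟩
  · intro N N' hN hN' u v hu hv
    refine SecondIsobaricAux.unique_aux Zgen rfl N N' ?_ u v hu hv
    intro u' v' hu' hv'
    rw [← (SecondIsobaricAux.nidentity_iff N).mp hN u' v' hu' hv',
        ← (SecondIsobaricAux.nidentity_iff N').mp hN' u' v' hu' hv']
  · intro N hN u v hu hv
    obtain ⟨h1, h2, h3⟩ := SecondIsobaricAux.N_parts N hN (u + v) u v le_rfl hu hv
    exact ⟨fun w hw => h3 w hw, h1⟩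
  · intro N hN a b ha hb hab
    exact SecondIsobaricAux.curve_part hN ha hb hab

end
end

section
/- Let H be a bialgebra over a commutative ring and let d₁, d₂ be curves in H. Then the sequence d defined by d(n) = ∑_{i+j=n} d₁(i)·d₂(j) is a curve in H. -/
open scoped TensorProduct

noncomputable section

private lemma curve_mul_sum4 {M : Type*} [AddCommMonoid M] (n : ℕ) (f : ℕ → ℕ → ℕ → ℕ → M) :
    ∑ i ∈ Finset.range (n+1), ∑ p ∈ Finset.range (i+1), ∑ r ∈ Finset.range (n-i+1),
      f p (i-p) r (n-i-r)
    = ∑ a ∈ Finset.range (n+1), ∑ p ∈ Finset.range (a+1), ∑ q ∈ Finset.range (n-a+1),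
      f p q (a-p) (n-a-q) := by
  have hL : ∑ i ∈ Finset.range (n+1), ∑ p ∈ Finset.range (i+1), ∑ r ∈ Finset.range (n-i+1),
      f p (i-p) r (n-i-r)
      = ∑ x ∈ (Finset.range (n+1)).sigma
          (fun i => Finset.range (i+1) ×ˢ Finset.range (n-i+1)),
        f x.2.1 (x.1 - x.2.1) x.2.2 (n - x.1 - x.2.2) := by
    rw [Finset.sum_sigma]
    exact Finset.sum_congr rfl fun i _ => by rw [Finset.sum_product]
  have hR : ∑ a ∈ Finset.range (n+1), ∑ p ∈ Finset.range (a+1), ∑ q ∈ Finset.range (n-a+1),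
      f p q (a-p) (n-a-q)
      = ∑ x ∈ (Finset.range (n+1)).sigma
          (fun a => Finset.range (a+1) ×ˢ Finset.range (n-a+1)),
        f x.2.1 x.2.2 (x.1 - x.2.1) (n - x.1 - x.2.2) := by
    rw [Finset.sum_sigma]
    exact Finset.sum_congr rfl fun a _ => by rw [Finset.sum_product]
  rw [hL, hR]
  refine Finset.sum_nbij' (fun x => ⟨x.2.1 + x.2.2, (x.2.1, x.1 - x.2.1)⟩)
    (fun x => ⟨x.2.1 + x.2.2, (x.2.1, x.1 - x.2.1)⟩) ?_ ?_ ?_ ?_ ?_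
  · rintro ⟨i, p, r⟩ hx
    simp only [Finset.mem_sigma, Finset.mem_product, Finset.mem_range] at hx ⊢
    omega
  · rintro ⟨a, p, q⟩ hx
    simp only [Finset.mem_sigma, Finset.mem_product, Finset.mem_range] at hx ⊢
    omega
  · rintro ⟨i, p, r⟩ hx
    simp only [Finset.mem_sigma, Finset.mem_product, Finset.mem_range] at hx
    simp only
    have h1 : p + (i - p) = i := by omega
    have h2 : p + r - p = r := by omega
    rw [h1, h2]
  · rintro ⟨a, p, q⟩ hx
    simp only [Finset.mem_sigma, Finset.mem_product, Finset.mem_range] at hx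
    simp only
    have h1 : p + (a - p) = a := by omega
    have h2 : p + q - p = q := by omega
    rw [h1, h2]
  · rintro ⟨i, p, r⟩ hx
    simp only [Finset.mem_sigma, Finset.mem_product, Finset.mem_range] at hx
    simp only
    have h2 : p + r - p = r := by omega
    have h3 : n - (p + r) - (i - p) = n - i - r := by omega
    rw [h2, h3]

/-- The product of two curves is a curve. -/
theorem curve_mul (R H : Type) [CommRing R] [Ring H] [Bialgebra R H]
    (d1 d2 : ℕ → H) (h1 : IsCurveB R d1) (h2 : IsCurveB R d2) :
    IsCurveB R (fun n => ∑ i ∈ Finset.range (n + 1), d1 i * d2 (n - i)) := by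
  obtain ⟨h10, h1n⟩ := h1
  obtain ⟨h20, h2n⟩ := h2
  constructor
  · simp [h10, h20]
  · intro n
    simp only
    rw [map_sum]
    have step : ∀ i ∈ Finset.range (n + 1),
        Coalgebra.comul (R := R) (d1 i * d2 (n - i)) =
        ∑ p ∈ Finset.range (i+1), ∑ r ∈ Finset.range (n-i+1),
          (d1 p * d2 r) ⊗ₜ[R] (d1 (i-p) * d2 (n-i-r)) := by
      intro i hi
      rw [Bialgebra.comul_mul, h1n i, h2n (n - i), Finset.sum_mul_sum]
      refine Finset.sum_congr rfl fun p _ => Finset.sum_congr rfl fun r _ => ?_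
      rw [Algebra.TensorProduct.tmul_mul_tmul]
    rw [Finset.sum_congr rfl step]
    rw [curve_mul_sum4 n (fun w x y z => (d1 w * d2 y) ⊗ₜ[R] (d1 x * d2 z))]
    refine Finset.sum_congr rfl fun a ha => ?_
    rw [TensorProduct.sum_tmul]
    refine Finset.sum_congr rfl fun p hp => ?_
    rw [TensorProduct.tmul_sum]


end
end

section
/- For every n ≥ 1, the Newton primitive P_n(Z) is a primitive element of NSymm, is homogeneous of weight n, and satisfies the recursion P_n(Z) = n·Z_n − Z_{n−1}P_1(Z) − Z_{n−2}P_2(Z) − ··· − Z_1P_{n−1}(Z). -/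
open scoped TensorProduct

noncomputable section

section MyAux

lemma blocks_ne_nil {n : ℕ} (hn : 0 < n) (c : Composition n) : c.blocks ≠ [] := by
  intro h
  have := c.blocks_sum
  rw [h] at this
  simp at this
  omega

lemma comp_head_tail {n : ℕ} (hn : 0 < n) (c : Composition n) :
    c.blocks = (n - c.blocks.tail.sum) :: c.blocks.tail := by
  obtain ⟨a, t, h⟩ : ∃ a t, c.blocks = a :: t := by
    cases hb : c.blocks with
    | nil => exact absurd hb (blocks_ne_nil hn c)
    | cons a t => exact ⟨a, t, rfl⟩
  have hs := c.blocks_sum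
  have ha : 0 < a := c.blocks_pos (h ▸ List.mem_cons_self)
  rw [h] at hs ⊢
  simp only [List.sum_cons] at hs
  simp only [List.tail_cons]
  congr 1
  omega

lemma comp_tail_sum_mem {n : ℕ} (hn : 0 < n) (c : Composition n)
    (hc : c ≠ Composition.single n hn) : c.blocks.tail.sum ∈ Finset.Ico 1 n := by
  have hlen : c.length ≠ 1 := fun h => hc ((Composition.eq_single_iff_length hn).2 h)
  obtain ⟨a, t, h⟩ : ∃ a t, c.blocks = a :: t := by
    cases hb : c.blocks with
    | nil => exact absurd hb (blocks_ne_nil hn c)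
    | cons a t => exact ⟨a, t, rfl⟩
  have ha : 0 < a := c.blocks_pos (h ▸ List.mem_cons_self)
  have hs := c.blocks_sum
  rw [h] at hs
  simp only [List.sum_cons] at hs
  have htnil : t ≠ [] := by
    intro ht
    apply hlen
    show c.blocks.length = 1
    rw [h, ht]
    rfl
  have hpos : 0 < t.sum := by
    obtain ⟨b, hb⟩ := List.exists_mem_of_ne_nil _ htnil
    calc 0 < b := c.blocks_pos (h ▸ List.mem_cons_of_mem a hb)
    _ ≤ t.sum := List.single_le_sum (fun b _ => Nat.zero_le b) _ hb
  rw [h]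
  simp only [List.tail_cons]
  exact Finset.mem_Ico.2 ⟨hpos, by omega⟩

lemma comp_heq {m n : ℕ} (h : m = n) (c : Composition m) (d : Composition n)
    (hb : c.blocks = d.blocks) : HEq c d := by
  subst h
  exact heq_of_eq (Composition.ext hb)

set_option maxHeartbeats 1000000 in
lemma sum_composition {M : Type} [AddCommMonoid M] (n : ℕ) (hn : 0 < n) (f : List ℕ → M) :
    ∑ c : Composition n, f c.blocks
      = f [n] + ∑ i ∈ Finset.Ico 1 n, ∑ c : Composition i, f ((n - i) :: c.blocks) := by
  classical
  rw [show (∑ i ∈ Finset.Ico 1 n, ∑ c : Composition i, f ((n - i) :: c.blocks))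
      = ∑ p ∈ (Finset.Ico 1 n).sigma (fun i => (Finset.univ : Finset (Composition i))),
          f ((n - p.1) :: p.2.blocks)
      from (Finset.sum_sigma (Finset.Ico 1 n) (fun i => (Finset.univ : Finset (Composition i)))
        (fun p => f ((n - p.1) :: p.2.blocks))).symm]
  rw [← Finset.add_sum_erase _ _ (Finset.mem_univ (Composition.single n hn)),
      Composition.single_blocks]
  congr 1
  refine Finset.sum_bij' (i := fun c _ => (⟨c.blocks.tail.sum, ⟨c.blocks.tail,
      fun ha => c.blocks_pos (List.mem_of_mem_tail ha), rfl⟩⟩ : (i : ℕ) × Composition i))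
    (j := fun p hp => ⟨(n - p.1) :: p.2.blocks, ?_, ?_⟩) ?_ ?_ ?_ ?_ ?_
  · intro i hi
    rcases List.mem_cons.1 hi with h | h
    · have := Finset.mem_Ico.1 (Finset.mem_sigma.1 hp).1
      omega
    · exact p.2.blocks_pos h
  · have := Finset.mem_Ico.1 (Finset.mem_sigma.1 hp).1
    simp only [List.sum_cons, p.2.blocks_sum]
    omega
  · intro c hc
    refine Finset.mem_sigma.2 ⟨?_, Finset.mem_univ _⟩
    exact comp_tail_sum_mem hn c (Finset.ne_of_mem_erase hc)
  · intro p hp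
    refine Finset.mem_erase.2 ⟨?_, Finset.mem_univ _⟩
    intro h
    have hl : (Composition.single n hn).blocks = [n] := Composition.single_blocks hn
    have : ((n - p.1) :: p.2.blocks) = [n] := by rw [← hl, ← h]
    have hb := blocks_ne_nil (Finset.mem_Ico.1 (Finset.mem_sigma.1 hp).1).1 p.2
    have := congrArg List.length this
    simp at this
    have h1 := (Finset.mem_Ico.1 (Finset.mem_sigma.1 hp).1).1
    omega
  · intro c hc
    exact Composition.ext (comp_head_tail hn c).symm
  · intro p hp
    obtain ⟨i, c⟩ := p
    simp only [List.tail_cons]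
    exact Sigma.ext c.blocks_sum (comp_heq c.blocks_sum _ _ rfl)
  · intro c hc
    exact congrArg f (comp_head_tail hn c)

lemma zword_cons (a : ℕ) (l : List ℕ) : Zword (a :: l) = Zgen a * Zword l := by
  simp [Zword]

lemma getLastD_cons_ne_nil {l : List ℕ} (h : l ≠ []) (a : ℕ) :
    (a :: l).getLastD 0 = l.getLastD 0 := by
  cases l with
  | nil => exact absurd rfl h
  | cons b t => simp [List.getLastD_cons]

lemma newtonP_eq (n : ℕ) : NewtonP n = ∑ c : Composition n,
    ((-1 : ℤ) ^ (c.blocks.length + 1) * (c.blocks.getLastD 0 : ℤ)) • Zword c.blocks := by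
  unfold NewtonP
  refine Finset.sum_congr rfl fun c _ => ?_
  rw [Composition.blocks_length]

lemma newton_rec (n : ℕ) (hn : 1 ≤ n) :
    NewtonP n = (n : ℤ) • Zgen n - ∑ i ∈ Finset.Ico 1 n, Zgen (n - i) * NewtonP i := by
  rw [newtonP_eq, sum_composition n hn
    (fun l => ((-1 : ℤ) ^ (l.length + 1) * (l.getLastD 0 : ℤ)) • Zword l), sub_eq_add_neg]
  congr 1
  · simp [Zword]
  · rw [← Finset.sum_neg_distrib]
    refine Finset.sum_congr rfl fun i hi => ?_
    have hi1 : 1 ≤ i := (Finset.mem_Ico.1 hi).1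
    rw [newtonP_eq, Finset.mul_sum, ← Finset.sum_neg_distrib]
    refine Finset.sum_congr rfl fun c _ => ?_
    rw [zword_cons, getLastD_cons_ne_nil (blocks_ne_nil hi1 c), List.length_cons,
      pow_succ, mul_smul_comm, ← neg_smul]
    congr 1
    ring

lemma zword_single (l : List ℕ) (hl : ∀ a ∈ l, 0 < a) :
    Zword l = MonoidAlgebra.single (FreeMonoid.ofList (l.map (· - 1))) (1 : ℤ) := by
  induction l with
  | nil =>
    simp [Zword]
    rfl
  | cons a t ih =>
    obtain ⟨b, rfl⟩ : ∃ b, a = b + 1 := ⟨a - 1, by have := hl a (List.mem_cons_self); omega⟩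
    rw [zword_cons, ih (fun x hx => hl x (List.mem_cons_of_mem _ hx))]
    show MonoidAlgebra.single (FreeMonoid.of b) 1 * _ = _
    rw [MonoidAlgebra.single_mul_single, one_mul]
    congr 1

lemma wt_map_sub (l : List ℕ) (hl : ∀ a ∈ l, 0 < a) :
    (l.map (· - 1)).sum + l.length = l.sum := by
  induction l with
  | nil => simp
  | cons a t ih =>
    have ha := hl a (List.mem_cons_self)
    have := ih (fun x hx => hl x (List.mem_cons_of_mem _ hx))
    simp only [List.map_cons, List.sum_cons, List.length_cons]
    omega

lemma newton_homog (n : ℕ) (hn : 1 ≤ n) : IsHomog (NewtonP n) n := by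
  intro w hw
  have hrw : NewtonP n = ∑ c : Composition n,
      MonoidAlgebra.single (FreeMonoid.ofList (c.blocks.map (· - 1)))
        ((-1 : ℤ) ^ (c.length + 1) * (c.blocks.getLastD 0 : ℤ)) := by
    unfold NewtonP
    refine Finset.sum_congr rfl fun c _ => ?_
    rw [zword_single c.blocks (fun a ha => c.blocks_pos ha), MonoidAlgebra.smul_single', mul_one]
  rw [coeffw, hrw, MonoidAlgebra.coeff_sum, Finset.sum_apply'] at hw
  obtain ⟨c, _, hc⟩ := Finset.exists_ne_zero_of_sum_ne_zero hw
  have hwc : w = FreeMonoid.ofList (c.blocks.map (· - 1)) := by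
    by_contra h
    exact hc (Finsupp.single_eq_of_ne' fun he => h he.symm)
  rw [hwc]
  show (FreeMonoid.toList (FreeMonoid.ofList (c.blocks.map (· - 1)))).sum
      + (FreeMonoid.toList (FreeMonoid.ofList (c.blocks.map (· - 1)))).length = n
  rw [FreeMonoid.toList_ofList, List.length_map,
    wt_map_sub c.blocks (fun a ha => c.blocks_pos ha), c.blocks_sum]

lemma Delta_Zgen (m : ℕ) :
    Delta (Zgen m) = ∑ a ∈ Finset.range (m + 1), Zgen a ⊗ₜ[ℤ] Zgen (m - a) := by
  cases m with
  | zero =>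
    show Delta 1 = Zgen 0 ⊗ₜ[ℤ] Zgen 0
    rw [map_one]
    rfl
  | succ i =>
    show Delta (MonoidAlgebra.of ℤ (FreeMonoid ℕ) (FreeMonoid.of i)) = _
    rw [Delta, MonoidAlgebra.lift_of, FreeMonoid.lift_eval_of]

lemma sum_rec_full (m : ℕ) (hm : 1 ≤ m) :
    ∑ i ∈ Finset.Ico 1 (m + 1), Zgen (m - i) * NewtonP i = (m : ℤ) • Zgen m := by
  rw [Finset.sum_Ico_succ_top hm, Nat.sub_self]
  rw [show Zgen 0 = 1 from rfl, one_mul]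
  conv_lhs => rw [newton_rec m hm]
  abel

lemma tri_swap {M : Type} [AddCommMonoid M] (n : ℕ) (f : ℕ → ℕ → M) :
    ∑ i ∈ Finset.Ico 1 n, ∑ a ∈ Finset.Ico 1 (n - i + 1), f i a
      = ∑ a ∈ Finset.Ico 1 n, ∑ i ∈ Finset.Ico 1 (n - a + 1), f i a := by
  rw [show (∑ i ∈ Finset.Ico 1 n, ∑ a ∈ Finset.Ico 1 (n - i + 1), f i a)
      = ∑ p ∈ (Finset.Ico 1 n).sigma (fun i => Finset.Ico 1 (n - i + 1)), f p.1 p.2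
      from (Finset.sum_sigma (Finset.Ico 1 n) (fun i => Finset.Ico 1 (n - i + 1)) (fun p => f p.1 p.2)).symm]
  rw [show (∑ a ∈ Finset.Ico 1 n, ∑ i ∈ Finset.Ico 1 (n - a + 1), f i a)
      = ∑ p ∈ (Finset.Ico 1 n).sigma (fun a => Finset.Ico 1 (n - a + 1)), f p.2 p.1
      from (Finset.sum_sigma (Finset.Ico 1 n) (fun a => Finset.Ico 1 (n - a + 1)) (fun p => f p.2 p.1)).symm]
  refine Finset.sum_nbij' (i := fun p => ⟨p.2, p.1⟩) (j := fun p => ⟨p.2, p.1⟩)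
    ?_ ?_ ?_ ?_ ?_
  · intro p hp
    obtain ⟨x, y⟩ := p
    simp only [Finset.mem_sigma, Finset.mem_Ico] at hp ⊢
    omega
  · intro p hp
    obtain ⟨x, y⟩ := p
    simp only [Finset.mem_sigma, Finset.mem_Ico] at hp ⊢
    omega
  · intro p _
    rfl
  · intro p _
    rfl
  · intro p _
    rfl

lemma reflect_sum {M : Type} [AddCommMonoid M] (m : ℕ) (f g : ℕ → M)
    (h : ∀ a, a < m → f a = g (m - a)) :
    ∑ a ∈ Finset.range m, f a = ∑ b ∈ Finset.Ico 1 (m + 1), g b := by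
  refine Finset.sum_nbij' (i := fun a => m - a) (j := fun b => m - b) ?_ ?_ ?_ ?_ ?_
  · intro a ha
    simp only [Finset.mem_range] at ha
    simp only [Finset.mem_Ico]
    omega
  · intro b hb
    simp only [Finset.mem_Ico] at hb
    simp only [Finset.mem_range]
    omega
  · intro a ha
    simp only [Finset.mem_range] at ha
    show m - (m - a) = a
    omega
  · intro b hb
    simp only [Finset.mem_Ico] at hb
    show m - (m - b) = b
    omega
  · intro a ha
    exact h a (Finset.mem_range.1 ha)

lemma Ico_reflect {M : Type} [AddCommMonoid M] (n : ℕ) (f g : ℕ → M)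
    (h : ∀ a, 1 ≤ a → a < n → f a = g (n - a)) :
    ∑ a ∈ Finset.Ico 1 n, f a = ∑ b ∈ Finset.Ico 1 n, g b := by
  refine Finset.sum_nbij' (i := fun a => n - a) (j := fun b => n - b) ?_ ?_ ?_ ?_ ?_
  · intro a ha
    simp only [Finset.mem_Ico] at ha ⊢
    omega
  · intro b hb
    simp only [Finset.mem_Ico] at hb ⊢
    omega
  · intro a ha
    simp only [Finset.mem_Ico] at ha
    show n - (n - a) = a
    omega
  · intro b hb
    simp only [Finset.mem_Ico] at hb
    show n - (n - b) = b
    omega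
  · intro a ha
    have := Finset.mem_Ico.1 ha
    exact h a this.1 this.2

lemma newton_prim : ∀ n, 1 ≤ n → IsPrimitive (NewtonP n) := by
  intro n
  induction n using Nat.strong_induction_on with
  | _ n ih =>
    intro hn
    show Delta (NewtonP n) = 1 ⊗ₜ[ℤ] NewtonP n + NewtonP n ⊗ₜ[ℤ] 1
    have hrec : ∑ i ∈ Finset.Ico 1 n, Zgen (n - i) * NewtonP i
        = (n : ℤ) • Zgen n - NewtonP n := by
      conv_rhs => rw [newton_rec n hn]
      abel
    conv_lhs => rw [newton_rec n hn]
    rw [map_sub, map_smul, map_sum, Delta_Zgen]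
    have hterm : ∀ i ∈ Finset.Ico 1 n, Delta (Zgen (n - i) * NewtonP i)
        = (∑ a ∈ Finset.range (n - i + 1),
            Zgen a ⊗ₜ[ℤ] (Zgen (n - i - a) * NewtonP i))
          + (∑ a ∈ Finset.range (n - i + 1),
            (Zgen a * NewtonP i) ⊗ₜ[ℤ] Zgen (n - i - a)) := by
      intro i hi
      rw [Finset.mem_Ico] at hi
      rw [map_mul, Delta_Zgen, ih i hi.2 hi.1, mul_add, Finset.sum_mul, Finset.sum_mul]
      congr 1
      · exact Finset.sum_congr rfl fun a _ => by
          rw [Algebra.TensorProduct.tmul_mul_tmul, mul_one]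
      · exact Finset.sum_congr rfl fun a _ => by
          rw [Algebra.TensorProduct.tmul_mul_tmul, mul_one]
    rw [Finset.sum_congr rfl hterm, Finset.sum_add_distrib]
    have hA : ∑ i ∈ Finset.Ico 1 n, ∑ a ∈ Finset.range (n - i + 1),
          Zgen a ⊗ₜ[ℤ] (Zgen (n - i - a) * NewtonP i)
        = 1 ⊗ₜ[ℤ] ((n : ℤ) • Zgen n - NewtonP n)
          + ∑ a ∈ Finset.Ico 1 n, ((n - a : ℕ) : ℤ) • (Zgen a ⊗ₜ[ℤ] Zgen (n - a)) := by
      have hsplit : ∀ i ∈ Finset.Ico 1 n, ∑ a ∈ Finset.range (n - i + 1),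
            Zgen a ⊗ₜ[ℤ] (Zgen (n - i - a) * NewtonP i)
          = 1 ⊗ₜ[ℤ] (Zgen (n - i) * NewtonP i)
            + ∑ a ∈ Finset.Ico 1 (n - i + 1),
                Zgen a ⊗ₜ[ℤ] (Zgen (n - i - a) * NewtonP i) := by
        intro i hi
        rw [Finset.range_eq_Ico, Finset.sum_eq_sum_Ico_succ_bot (by omega)]
        congr 2
      rw [Finset.sum_congr rfl hsplit, Finset.sum_add_distrib]
      congr 1
      · rw [← TensorProduct.tmul_sum, hrec]
      · rw [tri_swap n (fun i a => Zgen a ⊗ₜ[ℤ] (Zgen (n - i - a) * NewtonP i))]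
        refine Finset.sum_congr rfl fun a ha => ?_
        have ha' := Finset.mem_Ico.1 ha
        have hsub : ∀ i, n - i - a = n - a - i := fun i => Nat.sub_right_comm n i a
        calc ∑ i ∈ Finset.Ico 1 (n - a + 1), Zgen a ⊗ₜ[ℤ] (Zgen (n - i - a) * NewtonP i)
            = Zgen a ⊗ₜ[ℤ] ∑ i ∈ Finset.Ico 1 (n - a + 1), Zgen (n - a - i) * NewtonP i := by
              rw [TensorProduct.tmul_sum]
              exact Finset.sum_congr rfl fun i _ => by rw [hsub i]
          _ = ((n - a : ℕ) : ℤ) • (Zgen a ⊗ₜ[ℤ] Zgen (n - a)) := by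
              rw [sum_rec_full (n - a) (by omega), TensorProduct.tmul_smul]
    have hB : ∑ i ∈ Finset.Ico 1 n, ∑ a ∈ Finset.range (n - i + 1),
          (Zgen a * NewtonP i) ⊗ₜ[ℤ] Zgen (n - i - a)
        = ((n : ℤ) • Zgen n - NewtonP n) ⊗ₜ[ℤ] 1
          + ∑ b ∈ Finset.Ico 1 n, ((n - b : ℕ) : ℤ) • (Zgen (n - b) ⊗ₜ[ℤ] Zgen b) := by
      have hsplit : ∀ i ∈ Finset.Ico 1 n, ∑ a ∈ Finset.range (n - i + 1),
            (Zgen a * NewtonP i) ⊗ₜ[ℤ] Zgen (n - i - a)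
          = (Zgen (n - i) * NewtonP i) ⊗ₜ[ℤ] 1
            + ∑ b ∈ Finset.Ico 1 (n - i + 1),
                (Zgen (n - i - b) * NewtonP i) ⊗ₜ[ℤ] Zgen b := by
        intro i hi
        rw [Finset.sum_range_succ, Nat.sub_self]
        rw [reflect_sum (n - i) _ _ (fun a haa => ?_), add_comm]
        · rfl
        · rw [show n - i - (n - i - a) = a from by omega]
      rw [Finset.sum_congr rfl hsplit, Finset.sum_add_distrib]
      congr 1
      · rw [← TensorProduct.sum_tmul, hrec]
      · rw [tri_swap n (fun i b => (Zgen (n - i - b) * NewtonP i) ⊗ₜ[ℤ] Zgen b)]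
        refine Finset.sum_congr rfl fun b hb => ?_
        have hb' := Finset.mem_Ico.1 hb
        have hsub : ∀ i, n - i - b = n - b - i := fun i => Nat.sub_right_comm n i b
        calc ∑ i ∈ Finset.Ico 1 (n - b + 1), (Zgen (n - i - b) * NewtonP i) ⊗ₜ[ℤ] Zgen b
            = (∑ i ∈ Finset.Ico 1 (n - b + 1), Zgen (n - b - i) * NewtonP i) ⊗ₜ[ℤ] Zgen b := by
              rw [TensorProduct.sum_tmul]
              exact Finset.sum_congr rfl fun i _ => by rw [hsub i]
          _ = ((n - b : ℕ) : ℤ) • (Zgen (n - b) ⊗ₜ[ℤ] Zgen b) := by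
              rw [sum_rec_full (n - b) (by omega), TensorProduct.smul_tmul']
    rw [hA, hB]
    have hre : ∑ b ∈ Finset.Ico 1 n, ((n - b : ℕ) : ℤ) • (Zgen (n - b) ⊗ₜ[ℤ] Zgen b)
        = ∑ a ∈ Finset.Ico 1 n, (a : ℤ) • (Zgen a ⊗ₜ[ℤ] Zgen (n - a)) := by
      refine Ico_reflect n _ _ (fun a h1 h2 => ?_)
      rw [show n - (n - a) = a from by omega]
    rw [hre]
    rw [Finset.sum_range_succ, Finset.range_eq_Ico, Finset.sum_eq_sum_Ico_succ_bot
      (by omega : (0 : ℕ) < n), Nat.sub_self, Nat.sub_zero]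
    have hmerge : ∑ a ∈ Finset.Ico 1 n, ((n - a : ℕ) : ℤ) • (Zgen a ⊗ₜ[ℤ] Zgen (n - a))
          + ∑ a ∈ Finset.Ico 1 n, (a : ℤ) • (Zgen a ⊗ₜ[ℤ] Zgen (n - a))
        = ∑ a ∈ Finset.Ico 1 n, (n : ℤ) • (Zgen a ⊗ₜ[ℤ] Zgen (n - a)) := by
      rw [← Finset.sum_add_distrib]
      refine Finset.sum_congr rfl fun a ha => ?_
      rw [← add_smul]
      have := Finset.mem_Ico.1 ha
      congr 1
      omega
    rw [show Zgen 0 = 1 from rfl, smul_add, smul_add, Finset.smul_sum, ← hmerge,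
      TensorProduct.tmul_sub, TensorProduct.sub_tmul, TensorProduct.tmul_smul,
      TensorProduct.smul_tmul']
    simp only [TensorProduct.smul_tmul', TensorProduct.tmul_smul]
    abel

end MyAux

/-- The Newton primitives are primitive, homogeneous of weight `n`,
and satisfy the Newton recursion. -/
theorem newton_primitive (n : ℕ) (hn : 1 ≤ n) :
    IsPrimitive (NewtonP n) ∧ IsHomog (NewtonP n) n ∧
    NewtonP n = (n : ℤ) • Zgen n - ∑ i ∈ Finset.Ico 1 n, Zgen (n - i) * NewtonP i :=
  ⟨newton_prim n hn, newton_homog n hn, newton_rec n hn⟩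

end
end

section
/- For all r, n ≥ 1: if r divides n then V_r(P_n(Z)) = r · P_{n/r}(Z), and if r does not divide n then V_r(P_n(Z)) = 0. -/
open scoped TensorProduct

noncomputable section

lemma Ver_Zgen (r m : ℕ) (hm : 0 < m) :
    Ver r (Zgen m) = if r ∣ m then Zgen (m / r) else 0 := by
  obtain ⟨i, rfl⟩ := Nat.exists_eq_add_of_lt hm
  simp only [Nat.zero_add] at *
  simp [Ver, Zgen, Nat.add_comm]

lemma Ver_Zword (r : ℕ) (l : List ℕ) (hl : ∀ b ∈ l, 0 < b) :
    Ver r (Zword l) = if ∀ b ∈ l, r ∣ b then Zword (l.map (· / r)) else 0 := by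
  induction l with
  | nil => simp [Zword]
  | cons a l ih =>
    have ha : 0 < a := hl a (by simp)
    have h1 : Zword (a :: l) = Zgen a * Zword l := by simp [Zword]
    rw [h1, map_mul, Ver_Zgen r a ha, ih (fun b hb => hl b (by simp [hb]))]
    by_cases hd : r ∣ a
    · by_cases hall : ∀ b ∈ l, r ∣ b
      · simp [hd, hall, Zword]
      · have : ¬ ∀ b ∈ a :: l, r ∣ b := by
          intro h; exact hall fun b hb => h b (by simp [hb])
        simp [hd, hall, this]
    · have : ¬ ∀ b ∈ a :: l, r ∣ b := fun h => hd (h a (by simp))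
      simp [hd, this]

lemma getLastD_map_mul (r : ℕ) (l : List ℕ) :
    (l.map (· * r)).getLastD 0 = l.getLastD 0 * r := by
  induction l with
  | nil => simp
  | cons a l ih =>
    cases l with
    | nil => simp
    | cons b t => simpa using ih

lemma sum_map_mul (r : ℕ) (l : List ℕ) : (l.map (· * r)).sum = l.sum * r := by
  induction l with
  | nil => simp
  | cons a t ih => simp [ih, Nat.add_mul]

lemma sum_map_div (r : ℕ) (l : List ℕ) (h : ∀ b ∈ l, r ∣ b) :
    (l.map (· / r)).sum * r = l.sum := by
  induction l with
  | nil => simp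
  | cons a t ih =>
    simp only [List.map_cons, List.sum_cons, Nat.add_mul]
    rw [Nat.div_mul_cancel (h a (by simp)), ih (fun b hb => h b (by simp [hb]))]

lemma map_div_mul (r : ℕ) (l : List ℕ) (h : ∀ b ∈ l, r ∣ b) :
    (l.map (· / r)).map (· * r) = l := by
  rw [List.map_map]
  conv_rhs => rw [← List.map_id l]
  exact List.map_congr_left fun b hb => Nat.div_mul_cancel (h b hb)

lemma map_mul_div (r : ℕ) (hr : 0 < r) (l : List ℕ) :
    (l.map (· * r)).map (· / r) = l := by
  rw [List.map_map]
  conv_rhs => rw [← List.map_id l]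
  exact List.map_congr_left fun b _ => Nat.mul_div_cancel b hr

def compMul (r n : ℕ) (hr : 0 < r) (hdvd : r ∣ n) (c : Composition (n / r)) :
    Composition n where
  blocks := c.blocks.map (· * r)
  blocks_pos := by
    intro b hb
    simp only [List.mem_map] at hb
    obtain ⟨a, ha, rfl⟩ := hb
    exact Nat.mul_pos (c.blocks_pos ha) hr
  blocks_sum := by
    rw [sum_map_mul, c.blocks_sum, Nat.div_mul_cancel hdvd]

/-- Behaviour of Newton primitives under Verschiebung. -/
theorem verschiebung_newton (r n : ℕ) (hr : 1 ≤ r) (hn : 1 ≤ n) :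
    Ver r (NewtonP n) = if r ∣ n then (r : ℤ) • NewtonP (n / r) else 0 := by
  classical
  have hr0 : 0 < r := hr
  have key : ∀ c : Composition n, Ver r
      (((-1 : ℤ) ^ (c.length + 1) * (c.blocks.getLastD 0 : ℤ)) • Zword c.blocks) =
      if ∀ b ∈ c.blocks, r ∣ b then
        ((-1 : ℤ) ^ (c.length + 1) * (c.blocks.getLastD 0 : ℤ)) •
          Zword (c.blocks.map (· / r)) else 0 := by
    intro c
    rw [map_smul, Ver_Zword r c.blocks (fun b hb => c.blocks_pos hb)]
    split <;> simp
  rw [NewtonP, map_sum]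
  simp_rw [key]
  by_cases hdvd : r ∣ n
  · rw [if_pos hdvd]
    set g : Composition n → NSymm := fun c =>
      if ∀ b ∈ c.blocks, r ∣ b then
        ((-1 : ℤ) ^ (c.length + 1) * (c.blocks.getLastD 0 : ℤ)) •
          Zword (c.blocks.map (· / r)) else 0 with hg
    have hEinj : Function.Injective (compMul r n hr0 hdvd) := by
      intro a b hab
      have h1 : a.blocks.map (· * r) = b.blocks.map (· * r) :=
        congrArg Composition.blocks hab
      have h2 := congrArg (List.map (· / r)) h1
      rw [map_mul_div r hr0, map_mul_div r hr0] at h2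
      exact Composition.ext h2
    have hzero : ∀ c ∈ (Finset.univ : Finset (Composition n)),
        c ∉ Finset.image (compMul r n hr0 hdvd) Finset.univ → g c = 0 := by
      intro c _ hc
      rw [hg]
      simp only
      rw [if_neg]
      intro hall
      apply hc
      refine Finset.mem_image.mpr ⟨⟨c.blocks.map (· / r), ?_, ?_⟩, Finset.mem_univ _, ?_⟩
      · intro b hb
        simp only [List.mem_map] at hb
        obtain ⟨a, ha, rfl⟩ := hb
        exact Nat.div_pos (Nat.le_of_dvd (c.blocks_pos ha) (hall a ha)) hr0
      · have h := sum_map_div r c.blocks hall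
        rw [c.blocks_sum] at h
        exact (Nat.div_eq_of_eq_mul_left hr0 h.symm).symm
      · exact Composition.ext (map_div_mul r c.blocks hall)
    rw [← Finset.sum_subset (Finset.subset_univ _) hzero,
      Finset.sum_image (fun a _ b _ h => hEinj h)]
    rw [NewtonP, Finset.smul_sum]
    apply Finset.sum_congr rfl
    intro c _
    rw [hg]
    simp only
    have hall : ∀ b ∈ (compMul r n hr0 hdvd c).blocks, r ∣ b := by
      intro b hb
      simp only [compMul, List.mem_map] at hb
      obtain ⟨a, _, rfl⟩ := hb
      exact dvd_mul_left r a
    rw [if_pos hall]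
    have hblocks : (compMul r n hr0 hdvd c).blocks = c.blocks.map (· * r) := rfl
    have hlen : (compMul r n hr0 hdvd c).length = c.length := by
      simp [Composition.length, hblocks]
    rw [hblocks, map_mul_div r hr0, getLastD_map_mul, hlen, smul_smul]
    congr 1
    push_cast
    ring
  · rw [if_neg hdvd]
    apply Finset.sum_eq_zero
    intro c _
    rw [if_neg]
    intro hall
    exact hdvd (c.blocks_sum ▸ List.dvd_sum hall)

end
end
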